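/- arXiv:2511.23257 — 14 statements merged into one kernel-verified Lean document; each statement's English description precedes it below -/
import Mathlib

section
/- Let n ≥ 1 and let T be an (n+1)×(n+1) complex Hermitian positive semidefinite Toeplitz matrix (i.e. T_{jk} = c_{j-k} for 0 ≤ j,k ≤ n, where c_{-m} = conj(c_m)). Assume T has rank n, and let ξ = (ξ_0, …, ξ_n) be a nonzero vector in the kernel of T. Then every complex root z of the polynomial P(z) = Σ_{j=0}^n ξ_j z^j satisfies |z| = 1. -/
open scoped ComplexOrder

/-- Let `n ≥ 1` and let `T` be an `(n+1)×(n+1)` complex Hermitian positive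
semidefinite Toeplitz matrix (`T j k = c (j - k)` with `c (-m) = conj (c m)`), of rank `n`,
and let `ξ` be a nonzero vector in the kernel of `T`. Then every complex root `z` of
`P(z) = ∑ ξ_j z^j` satisfies `|z| = 1`. -/
theorem stmt0 (n : ℕ) (hn : 1 ≤ n) (c : ℤ → ℂ) (hc : ∀ m : ℤ, c (-m) = star (c m))
    (T : Matrix (Fin (n + 1)) (Fin (n + 1)) ℂ)
    (hT : ∀ j k : Fin (n + 1), T j k = c ((j : ℤ) - (k : ℤ)))
    (hpsd : T.PosSemidef) (hrank : T.rank = n)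
    (ξ : Fin (n + 1) → ℂ) (hξ : ξ ≠ 0) (hker : T.mulVec ξ = 0)
    (z : ℂ) (hz : ∑ j : Fin (n + 1), ξ j * z ^ (j : ℕ) = 0) :
    ‖z‖ = 1 := by
  classical
  open Matrix in
  -- synthetic division of P(x) = ∑ ξ_j x^j by (x - z)
  set a : Fin (n + 1) → ℂ :=
    fun j => ∑ i : Fin (n + 1), if (j : ℕ) < (i : ℕ) then ξ i * z ^ ((i : ℕ) - (j : ℕ) - 1) else 0
    with ha_def
  set b : Fin (n + 1) → ℂ :=
    fun j => ∑ i : Fin (n + 1), if (j : ℕ) ≤ (i : ℕ) then ξ i * z ^ ((i : ℕ) - (j : ℕ)) else 0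
    with hb_def
  have hb0 : b 0 = 0 := by
    rw [hb_def]; simpa using hz
  have halast : a (Fin.last n) = 0 := by
    rw [ha_def]
    apply Finset.sum_eq_zero
    intro i _
    rw [if_neg]
    simp [Fin.last]
    omega
  have hab : ∀ (j k : Fin (n + 1)), (k : ℕ) = (j : ℕ) + 1 → b k = a j := by
    intro j k hk
    rw [ha_def, hb_def]
    apply Finset.sum_congr rfl
    intro i _
    by_cases h : (j : ℕ) < (i : ℕ)
    · rw [if_pos (by omega), if_pos h]
      rw [show (i : ℕ) - (k : ℕ) = (i : ℕ) - (j : ℕ) - 1 from by omega]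
    · rw [if_neg (by omega), if_neg h]
  have hxib : ∀ j, ξ j = b j - z * a j := by
    intro j
    have hsplit : b j - z * a j =
        ∑ i : Fin (n + 1),
          ((if (j : ℕ) ≤ (i : ℕ) then ξ i * z ^ ((i : ℕ) - (j : ℕ)) else 0)
            - z * (if (j : ℕ) < (i : ℕ) then ξ i * z ^ ((i : ℕ) - (j : ℕ) - 1) else 0)) := by
      rw [Finset.sum_sub_distrib, ← Finset.mul_sum, ha_def, hb_def]
    rw [hsplit, Finset.sum_eq_single j]
    · simp
    · intro i _ hij
      have hij' : (i : ℕ) ≠ (j : ℕ) := fun h => hij (Fin.ext h)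
      by_cases h : (j : ℕ) < (i : ℕ)
      · rw [if_pos (le_of_lt h), if_pos h]
        have hpow : z ^ ((i : ℕ) - (j : ℕ)) = z * z ^ ((i : ℕ) - (j : ℕ) - 1) := by
          rw [← pow_succ']
          congr 1
          omega
        rw [hpow]
        ring
      · rw [if_neg (by omega), if_neg h]
        simp
    · intro h
      exact absurd (Finset.mem_univ j) h
  have hbxi : b = ξ + z • a := by
    funext j
    simp only [Pi.add_apply, Pi.smul_apply, smul_eq_mul]
    rw [hxib j]
    ring
  have hTb : T *ᵥ b = z • (T *ᵥ a) := by
    rw [hbxi, Matrix.mulVec_add, Matrix.mulVec_smul, hker, zero_add]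
  set S : ℂ := star a ⬝ᵥ T *ᵥ a with hS_def
  have hSnn : 0 ≤ S := hpsd.dotProduct_mulVec_nonneg a
  have hSreal : star S = S := by
    have him : S.im = 0 := by
      have := Complex.le_def.mp hSnn
      simpa using this.2.symm
    exact Complex.conj_eq_iff_im.mpr him
  -- the key Toeplitz shift identity
  have expand : ∀ x : Fin (n + 1) → ℂ,
      star x ⬝ᵥ T *ᵥ x = ∑ j : Fin (n + 1), ∑ k : Fin (n + 1), star (x j) * (T j k * x k) := by
    intro x
    simp [dotProduct, Matrix.mulVec, Finset.mul_sum]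
  have hshiftT : ∀ (j k : Fin n), T j.succ k.succ = T j.castSucc k.castSucc := by
    intro j k
    rw [hT, hT]
    congr 1
    simp [Fin.val_succ, Fin.coe_castSucc]
  have hS'eq : star b ⬝ᵥ T *ᵥ b = S := by
    rw [hS_def, expand a, expand b]
    rw [Fin.sum_univ_succ
      (f := fun j => ∑ k : Fin (n + 1), star (b j) * (T j k * b k))]
    rw [Fin.sum_univ_castSucc
      (f := fun j => ∑ k : Fin (n + 1), star (a j) * (T j k * a k))]
    rw [hb0, halast]
    simp only [star_zero, zero_mul, Finset.sum_const_zero, zero_add, add_zero, mul_zero]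
    apply Finset.sum_congr rfl
    intro j _
    rw [Fin.sum_univ_succ (f := fun k => star (b j.succ) * (T j.succ k * b k))]
    rw [Fin.sum_univ_castSucc (f := fun k => star (a j.castSucc) * (T j.castSucc k * a k))]
    rw [hb0, halast]
    simp only [mul_zero, zero_add, add_zero]
    apply Finset.sum_congr rfl
    intro k _
    have e1 : b j.succ = a j.castSucc := hab _ _ (by simp)
    have e2 : b k.succ = a k.castSucc := hab _ _ (by simp)
    rw [e1, e2, hshiftT]
  have hherm : star b ⬝ᵥ T *ᵥ a = star (star a ⬝ᵥ T *ᵥ b) := by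
    rw [star_dotProduct]
    congr 1
    rw [Matrix.star_mulVec, ← Matrix.dotProduct_mulVec, hpsd.1.eq]
  have key : S = (z * star z) * S := by
    calc S = star b ⬝ᵥ T *ᵥ b := hS'eq.symm
    _ = star b ⬝ᵥ (z • (T *ᵥ a)) := by rw [hTb]
    _ = z * (star b ⬝ᵥ (T *ᵥ a)) := by rw [dotProduct_smul, smul_eq_mul]
    _ = z * star (star a ⬝ᵥ T *ᵥ b) := by rw [hherm]
    _ = z * star (star a ⬝ᵥ (z • (T *ᵥ a))) := by rw [hTb]
    _ = z * star (z * S) := by rw [dotProduct_smul, smul_eq_mul]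
    _ = z * (star z * star S) := by rw [star_mul']
    _ = (z * star z) * S := by rw [hSreal]; ring
  by_cases hS : S = 0
  · -- then a and b are independent kernel vectors, contradicting rank = n
    exfalso
    have hTa : T *ᵥ a = 0 := (hpsd.dotProduct_mulVec_zero_iff a).mp hS
    have hTbz : T *ᵥ b = 0 := by rw [hTb, hTa, smul_zero]
    have hane : a ≠ 0 := by
      intro ha0
      apply hξ
      have hbj : ∀ j, b j = 0 := by
        intro j
        induction j using Fin.cases with
        | zero => exact hb0
        | succ i => rw [hab i.castSucc i.succ (by simp), ha0]; rfl
      funext j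
      rw [Pi.zero_apply, hxib j, hbj j, ha0]
      simp
    have hdim : Module.finrank ℂ (LinearMap.ker T.mulVecLin) = 1 := by
      have h := LinearMap.finrank_range_add_finrank_ker T.mulVecLin
      rw [Matrix.rank] at hrank
      simp [Module.finrank_pi] at h
      omega
    have haK : a ∈ LinearMap.ker T.mulVecLin := by
      rw [LinearMap.mem_ker, Matrix.mulVecLin_apply]; exact hTa
    have hbK : b ∈ LinearMap.ker T.mulVecLin := by
      rw [LinearMap.mem_ker, Matrix.mulVecLin_apply]; exact hTbz
    have haK0 : (⟨a, haK⟩ : LinearMap.ker T.mulVecLin) ≠ 0 := by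
      simp only [ne_eq, Submodule.mk_eq_zero]
      exact hane
    obtain ⟨μ, hμ⟩ := (finrank_eq_one_iff_of_nonzero' (⟨a, haK⟩ : LinearMap.ker T.mulVecLin)
      haK0).mp hdim ⟨b, hbK⟩
    have hμ' : ∀ j, b j = μ * a j := by
      intro j
      have := congrArg Subtype.val hμ
      exact (congrFun this j).symm
    apply hane
    funext j
    rw [Pi.zero_apply]
    induction j using Fin.reverseInduction with
    | last => exact halast
    | cast i ih =>
      have h1 : b i.succ = a i.castSucc := hab _ _ (by simp)
      rw [← h1, hμ' i.succ, ih, mul_zero]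
  · have hz1 : z * star z = 1 := by
      have h0 : (1 - z * star z) * S = 0 := by linear_combination key
      rcases mul_eq_zero.mp h0 with h | h
      · exact (sub_eq_zero.mp h).symm
      · exact absurd h hS
    have : (Complex.normSq z : ℂ) = 1 := by
      rw [← Complex.mul_conj]; exact hz1
    have hn1 : Complex.normSq z = 1 := by exact_mod_cast this
    rw [Complex.norm_def, hn1, Real.sqrt_one]
end

section
/- Let n ≥ 1 and let T be an (n+1)×(n+1) complex Hermitian positive semidefinite Toeplitz matrix (T_{jk} = c_{j-k} with c_{-m} = conj(c_m)) of rank n, and let ξ = (ξ_0, …, ξ_n) be a nonzero vector in the kernel of T. Then ξ_0 ≠ 0 (and, by the same argument applied to the reversed vector, ξ_n ≠ 0). -/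
open scoped ComplexOrder
open Matrix

/-- Auxiliary lemma: the first coordinate of a nonzero kernel vector is nonzero. -/
lemma stmt2_aux (n : ℕ) (hn : 1 ≤ n) (c : ℤ → ℂ)
    (T : Matrix (Fin (n + 1)) (Fin (n + 1)) ℂ)
    (hT : ∀ j k : Fin (n + 1), T j k = c ((j : ℤ) - (k : ℤ)))
    (hpsd : T.PosSemidef) (hrank : T.rank = n)
    (ξ : Fin (n + 1) → ℂ) (hξ : ξ ≠ 0) (hker : T.mulVec ξ = 0) :
    ξ 0 ≠ 0 := by
  intro h0
  -- the shifted vector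
  set η : Fin (n + 1) → ℂ := fun j => if hj : (j : ℕ) + 1 ≤ n then ξ ⟨(j : ℕ) + 1, by omega⟩ else 0
    with hη
  have hηcast : ∀ j : Fin n, η j.castSucc = ξ j.succ := by
    intro j
    have hj : (j.castSucc : ℕ) + 1 ≤ n := j.isLt
    simp only [hη, dif_pos hj]
    congr 1
  have hηlast : η (Fin.last n) = 0 := by
    simp [hη]
  -- the quadratic form of η vanishes
  have hQξ : star ξ ⬝ᵥ T.mulVec ξ = 0 := by rw [hker]; simp
  have hQη : star η ⬝ᵥ T.mulVec η = 0 := by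
    have key : star η ⬝ᵥ T.mulVec η = star ξ ⬝ᵥ T.mulVec ξ := by
      have lhs : star η ⬝ᵥ T.mulVec η =
          ∑ j : Fin n, ∑ k : Fin n,
            star (η j.castSucc) * T j.castSucc k.castSucc * η k.castSucc := by
        simp only [dotProduct, Matrix.mulVec, dotProduct, Pi.star_apply,
          Finset.mul_sum]
        rw [Fin.sum_univ_castSucc]
        simp only [hηlast, star_zero, zero_mul, mul_zero, Finset.sum_const_zero, add_zero]
        refine Finset.sum_congr rfl fun j _ => ?_
        rw [Fin.sum_univ_castSucc]
        simp [hηlast, mul_assoc]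
      have rhs : star ξ ⬝ᵥ T.mulVec ξ =
          ∑ j : Fin n, ∑ k : Fin n,
            star (ξ j.succ) * T j.succ k.succ * ξ k.succ := by
        simp only [dotProduct, Matrix.mulVec, dotProduct, Pi.star_apply,
          Finset.mul_sum]
        rw [Fin.sum_univ_succ]
        simp only [h0, star_zero, zero_mul, mul_zero, Finset.sum_const_zero, zero_add]
        refine Finset.sum_congr rfl fun j _ => ?_
        rw [Fin.sum_univ_succ]
        simp [h0, mul_assoc]
      rw [lhs, rhs]
      refine Finset.sum_congr rfl fun j _ => Finset.sum_congr rfl fun k _ => ?_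
      rw [hηcast j, hηcast k]
      congr 1
      rw [hT, hT]
      congr 1
      simp only [Fin.coe_castSucc, Fin.val_succ]
      push_cast
      try ring
    rw [key, hQξ]
  have hkerη : T.mulVec η = 0 := (hpsd.dotProduct_mulVec_zero_iff η).mp hQη
  -- the kernel is one-dimensional
  have hfr : Module.finrank ℂ (LinearMap.ker T.mulVecLin) = 1 := by
    have := LinearMap.finrank_range_add_finrank_ker T.mulVecLin
    rw [Module.finrank_pi, Fintype.card_fin] at this
    have hr : Module.finrank ℂ ↥(LinearMap.range T.mulVecLin) = n := hrank
    omega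
  have hξmem : ξ ∈ LinearMap.ker T.mulVecLin := by
    rw [LinearMap.mem_ker, Matrix.mulVecLin_apply, hker]
  have hηmem : η ∈ LinearMap.ker T.mulVecLin := by
    rw [LinearMap.mem_ker, Matrix.mulVecLin_apply, hkerη]
  have hspan : Submodule.span ℂ {ξ} = LinearMap.ker T.mulVecLin := by
    apply Submodule.eq_of_le_of_finrank_le
    · rwa [Submodule.span_singleton_le_iff_mem]
    · rw [hfr, finrank_span_singleton hξ]
  have hηspan : η ∈ Submodule.span ℂ ({ξ} : Set (Fin (n + 1) → ℂ)) := hspan ▸ hηmem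
  obtain ⟨lam, hlam⟩ := Submodule.mem_span_singleton.mp hηspan
  -- ξ is identically zero: contradiction
  have hzero : ∀ m : ℕ, ∀ hm : m ≤ n, ξ ⟨m, by omega⟩ = 0 := by
    intro m
    induction m with
    | zero => intro _; exact h0
    | succ m ih =>
      intro hm
      have hm' : m ≤ n := by omega
      have : η ⟨m, by omega⟩ = ξ ⟨m + 1, by omega⟩ := by
        simp only [hη, dif_pos (show m + 1 ≤ n from hm)]
      rw [← this, ← hlam]
      simp [ih hm']
  apply hξ
  funext j
  have := hzero j (by omega : (j : ℕ) ≤ n)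
  simpa using this

/-- Let `n ≥ 1` and let `T` be an `(n+1)×(n+1)` complex Hermitian positive
semidefinite Toeplitz matrix (`T j k = c (j - k)` with `c (-m) = conj (c m)`) of rank `n`, and
let `ξ` be a nonzero vector in the kernel of `T`. Then `ξ 0 ≠ 0` and `ξ n ≠ 0`. -/
theorem stmt2 (n : ℕ) (hn : 1 ≤ n) (c : ℤ → ℂ) (hc : ∀ m : ℤ, c (-m) = star (c m))
    (T : Matrix (Fin (n + 1)) (Fin (n + 1)) ℂ)
    (hT : ∀ j k : Fin (n + 1), T j k = c ((j : ℤ) - (k : ℤ)))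
    (hpsd : T.PosSemidef) (hrank : T.rank = n)
    (ξ : Fin (n + 1) → ℂ) (hξ : ξ ≠ 0) (hker : T.mulVec ξ = 0) :
    ξ 0 ≠ 0 ∧ ξ (Fin.last n) ≠ 0 := by
  refine ⟨stmt2_aux n hn c T hT hpsd hrank ξ hξ hker, ?_⟩
  -- reversed conjugate vector
  set ζ : Fin (n + 1) → ℂ := fun j => star (ξ j.rev) with hζ
  have hζ0 : ζ 0 = star (ξ (Fin.last n)) := by
    simp [hζ, Fin.rev_zero]
  have hζne : ζ ≠ 0 := by
    intro h
    apply hξ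
    funext j
    have := congrFun h j.rev
    simp only [hζ, Fin.rev_rev, Pi.zero_apply] at this
    exact star_eq_zero.mp this
  have hrevval : ∀ j : Fin (n + 1), ((j.rev : ℕ) : ℤ) = (n : ℤ) - (j : ℤ) := by
    intro j
    have h1 : (j.rev : ℕ) = n + 1 - ((j : ℕ) + 1) := Fin.val_rev j
    have h2 : (j : ℕ) < n + 1 := j.isLt
    omega
  have hkerζ : T.mulVec ζ = 0 := by
    funext j
    have key : T.mulVec ζ j = star (T.mulVec ξ j.rev) := by
      simp only [Matrix.mulVec, dotProduct, star_sum]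
      rw [← Equiv.sum_comp (Fin.revPerm : Equiv.Perm (Fin (n + 1)))
        (fun m => star (T j.rev m * ξ m))]
      refine Finset.sum_congr rfl fun k _ => ?_
      simp only [Fin.revPerm_apply, star_mul']
      have hc' : T j k = star (T j.rev k.rev) := by
        rw [hT, hT, ← hc]
        congr 1
        rw [hrevval j, hrevval k]
        try ring
      rw [hc']
    rw [key, hker]
    simp
  have := stmt2_aux n hn c T hT hpsd hrank ζ hζne hkerζ
  rw [hζ0] at this
  intro h
  exact this (by rw [h, star_zero])
end

section
/- Let L > 0 and for n ∈ ℤ define U_n(x) = L^{−1/2} exp(2πinx/L) for x ∈ [0, L] and U_n(x) = 0 for x ∉ [0, L]. With the involution f*(x) = conj(f(−x)) and convolution (f∗g)(y) = ∫_ℝ f(x) g(y − x) dx, one has for all integers n ≠ m and all y ∈ [0, L]: (U_m* ∗ U_n)(y) + (U_m* ∗ U_n)(−y) = (sin(2πmy/L) − sin(2πny/L)) / (π(n − m)). -/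
/-- `U n` for `L`: the function `x ↦ L^(-1/2) exp(2πinx/L)` on `[0, L]`, extended by `0`. -/
noncomputable def Ufun (L : ℝ) (n : ℤ) (x : ℝ) : ℂ :=
  if x ∈ Set.Icc (0 : ℝ) L then
    ((Real.sqrt L)⁻¹ : ℝ) * Complex.exp (2 * Real.pi * Complex.I * n * x / L)
  else 0

/-- The involution `f*(x) = conj (f (-x))`. -/
noncomputable def fstar (f : ℝ → ℂ) (x : ℝ) : ℂ := starRingEnd ℂ (f (-x))

/-- Convolution `(f ∗ g)(y) = ∫ f(x) g(y - x) dx`. -/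
noncomputable def conv (f g : ℝ → ℂ) (y : ℝ) : ℂ := ∫ x : ℝ, f x * g (y - x)

lemma alg5 (p Lc mm nn E1 E2 : ℂ) (hp : p ≠ 0) (hLc : Lc ≠ 0) (hmn : mm - nn ≠ 0)
    (hE1 : E1 ≠ 0) (hE2 : E2 ≠ 0) :
    Lc⁻¹ * E1 * ((1 - E2 * E1⁻¹) / (2 * p * Complex.I * (mm - nn) / Lc)) +
      Lc⁻¹ * E1⁻¹ * ((E2⁻¹ * E1 - 1) / (2 * p * Complex.I * (mm - nn) / Lc)) =
      ((E2⁻¹ - E2) * Complex.I / 2 - (E1⁻¹ - E1) * Complex.I / 2) / (p * (nn - mm)) := by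
  have hnm : nn - mm ≠ 0 := fun h => hmn (by linear_combination -h)
  have hI := Complex.I_ne_zero
  have hIs : Complex.I * Complex.I = -1 := Complex.I_mul_I
  set w : ℂ := 2 * p * Complex.I * (mm - nn) with hw'
  have hw : w ≠ 0 :=
    mul_ne_zero (mul_ne_zero (mul_ne_zero two_ne_zero hp) hI) hmn
  field_simp
  ring_nf
  rw [hw']
  linear_combination (-(-(E1 * E2 ^ 2) + E1 + E1 ^ 2 * E2 - E2) * (2 * p * (mm - nn))) * hIs

open MeasureTheory Complex in
lemma conv_eval (L : ℝ) (hL : 0 < L) (n m : ℤ) (hnm : n ≠ m) (t : ℝ)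
    (ht : t ∈ Set.Icc (-L) L) :
    conv (fstar (Ufun L m)) (Ufun L n) t =
      (L : ℂ)⁻¹ * Complex.exp (2 * Real.pi * Complex.I * n * t / L) *
        ((Complex.exp ((2 * Real.pi * Complex.I * ((m : ℂ) - n) / L) * ((min t 0 : ℝ) : ℂ)) -
          Complex.exp ((2 * Real.pi * Complex.I * ((m : ℂ) - n) / L) * ((max (t - L) (-L) : ℝ) : ℂ))) /
          (2 * Real.pi * Complex.I * ((m : ℂ) - n) / L)) := by
  set a : ℂ := 2 * Real.pi * Complex.I * ((m : ℂ) - n) / L with ha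
  have hL0 : (L : ℂ) ≠ 0 := by exact_mod_cast hL.ne'
  have hmn : ((m : ℂ) - n) ≠ 0 := by
    have : (m : ℂ) ≠ n := by
      intro h; exact hnm (by exact_mod_cast h.symm)
    exact sub_ne_zero.2 this
  have hπ : (Real.pi : ℂ) ≠ 0 := by exact_mod_cast Real.pi_ne_zero
  have ha0 : a ≠ 0 := by
    rw [ha]
    apply div_ne_zero _ hL0
    exact mul_ne_zero (mul_ne_zero (mul_ne_zero two_ne_zero hπ) Complex.I_ne_zero) hmn
  have hpq : max (t - L) (-L) ≤ min t 0 := by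
    apply max_le <;> apply le_min <;> linarith [ht.1, ht.2]
  have hsq : ((((Real.sqrt L)⁻¹ : ℝ)) : ℂ) * ((((Real.sqrt L)⁻¹ : ℝ)) : ℂ) = (L : ℂ)⁻¹ := by
    have : ((Real.sqrt L)⁻¹ : ℝ) * (Real.sqrt L)⁻¹ = L⁻¹ := by
      rw [← mul_inv, Real.mul_self_sqrt hL.le]
    exact_mod_cast this
  have hpt : ∀ x : ℝ, fstar (Ufun L m) x * Ufun L n (t - x) =
      Set.indicator (Set.Icc (max (t - L) (-L)) (min t 0))
        (fun x : ℝ => ((L : ℂ)⁻¹ * Complex.exp (2 * Real.pi * Complex.I * n * t / L)) *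
          Complex.exp (a * (x : ℂ))) x := by
    intro x
    have hmem : x ∈ Set.Icc (max (t - L) (-L)) (min t 0) ↔
        ((-x) ∈ Set.Icc (0 : ℝ) L ∧ (t - x) ∈ Set.Icc (0 : ℝ) L) := by
      simp only [Set.mem_Icc, max_le_iff, le_min_iff]
      constructor
      · rintro ⟨⟨h1, h2⟩, h3, h4⟩
        exact ⟨⟨by linarith, by linarith⟩, by linarith, by linarith⟩
      · rintro ⟨⟨h1, h2⟩, h3, h4⟩
        exact ⟨⟨by linarith, by linarith⟩, by linarith, by linarith⟩
    by_cases hx : x ∈ Set.Icc (max (t - L) (-L)) (min t 0)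
    · rw [Set.indicator_of_mem hx]
      obtain ⟨hx1, hx2⟩ := hmem.1 hx
      rw [fstar, Ufun, Ufun, if_pos hx1, if_pos hx2]
      have hconj : (starRingEnd ℂ) (((Real.sqrt L)⁻¹ : ℝ) *
          Complex.exp (2 * Real.pi * Complex.I * m * (-x : ℝ) / L)) =
          ((Real.sqrt L)⁻¹ : ℝ) * Complex.exp (2 * Real.pi * Complex.I * m * (x : ℂ) / L) := by
        rw [map_mul, ← Complex.exp_conj, Complex.conj_ofReal]
        congr 2
        simp only [map_div₀, map_mul, map_neg, Complex.conj_I, Complex.conj_ofReal, map_ofNat,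
          map_intCast, Complex.ofReal_neg]
        ring
      rw [hconj]
      calc (((Real.sqrt L)⁻¹ : ℝ) : ℂ) * Complex.exp (2 * Real.pi * Complex.I * m * (x : ℂ) / L) *
            ((((Real.sqrt L)⁻¹ : ℝ) : ℂ) * Complex.exp (2 * Real.pi * Complex.I * n * ((t - x : ℝ) : ℂ) / L))
          = ((((Real.sqrt L)⁻¹ : ℝ) : ℂ) * (((Real.sqrt L)⁻¹ : ℝ) : ℂ)) *
            Complex.exp (2 * Real.pi * Complex.I * m * (x : ℂ) / L +
              2 * Real.pi * Complex.I * n * ((t - x : ℝ) : ℂ) / L) := by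
            rw [Complex.exp_add]; ring
        _ = (L : ℂ)⁻¹ * Complex.exp (2 * Real.pi * Complex.I * m * (x : ℂ) / L +
              2 * Real.pi * Complex.I * n * ((t - x : ℝ) : ℂ) / L) := by rw [hsq]
        _ = (L : ℂ)⁻¹ * (Complex.exp (2 * Real.pi * Complex.I * n * t / L) *
              Complex.exp (a * (x : ℂ))) := by
            rw [← Complex.exp_add]
            congr 2
            rw [ha]
            push_cast
            field_simp
            ring
        _ = ((L : ℂ)⁻¹ * Complex.exp (2 * Real.pi * Complex.I * n * t / L)) *
              Complex.exp (a * (x : ℂ)) := by ring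
    · rw [Set.indicator_of_notMem hx]
      rw [fstar, Ufun, Ufun]
      rcases not_and_or.1 (fun h => hx (hmem.2 h)) with h | h
      · rw [if_neg h, map_zero, zero_mul]
      · rw [if_neg h, mul_zero]
  have hint : conv (fstar (Ufun L m)) (Ufun L n) t =
      ∫ x : ℝ, Set.indicator (Set.Icc (max (t - L) (-L)) (min t 0))
        (fun x : ℝ => ((L : ℂ)⁻¹ * Complex.exp (2 * Real.pi * Complex.I * n * t / L)) *
          Complex.exp (a * (x : ℂ))) x := by
    rw [conv]
    exact integral_congr_ae (Filter.Eventually.of_forall hpt)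
  rw [hint, integral_indicator measurableSet_Icc, integral_Icc_eq_integral_Ioc,
    ← intervalIntegral.integral_of_le hpq, intervalIntegral.integral_const_mul,
    integral_exp_mul_complex ha0, mul_assoc]

/-- For `n ≠ m` and `y ∈ [0, L]`:
`(U_m* ∗ U_n)(y) + (U_m* ∗ U_n)(-y) = (sin(2πmy/L) - sin(2πny/L)) / (π(n - m))`. -/
theorem stmt5 (L : ℝ) (hL : 0 < L) (n m : ℤ) (hnm : n ≠ m)
    (y : ℝ) (hy : y ∈ Set.Icc (0 : ℝ) L) :
    conv (fstar (Ufun L m)) (Ufun L n) y + conv (fstar (Ufun L m)) (Ufun L n) (-y) =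
      ((Real.sin (2 * Real.pi * m * y / L) - Real.sin (2 * Real.pi * n * y / L)) /
        (Real.pi * (n - m)) : ℝ) := by
  obtain ⟨hy0, hyL⟩ := hy
  have hL0 : (L : ℂ) ≠ 0 := by exact_mod_cast hL.ne'
  have hπ : (Real.pi : ℂ) ≠ 0 := by exact_mod_cast Real.pi_ne_zero
  have hmn : ((m : ℂ) - n) ≠ 0 := by
    have : (m : ℂ) ≠ n := by
      intro h; exact hnm (by exact_mod_cast h.symm)
    exact sub_ne_zero.2 this
  have h1 := conv_eval L hL n m hnm y ⟨by linarith, hyL⟩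
  have h2 := conv_eval L hL n m hnm (-y) ⟨by linarith, by linarith⟩
  rw [min_eq_right hy0, max_eq_left (by linarith : -L ≤ y - L)] at h1
  rw [min_eq_left (by linarith : -y ≤ 0),
    max_eq_right (by linarith : -y - L ≤ -L)] at h2
  rw [h1, h2]
  rw [show ((2 : ℂ) * Real.pi * Complex.I * n * ((-y : ℝ) : ℂ) / L) =
      -(2 * Real.pi * Complex.I * n * (y : ℂ) / L) from by push_cast; ring]
  rw [show Complex.exp ((2 * Real.pi * Complex.I * ((m : ℂ) - n) / L) * (((0 : ℝ)) : ℂ)) = 1 from by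
    simp]
  rw [show Complex.exp ((2 * Real.pi * Complex.I * ((m : ℂ) - n) / L) * (((y - L : ℝ)) : ℂ)) =
      Complex.exp (2 * Real.pi * Complex.I * m * (y : ℂ) / L) *
        Complex.exp (-(2 * Real.pi * Complex.I * n * (y : ℂ) / L)) from by
    rw [← Complex.exp_add]
    rw [show (2 * (Real.pi : ℂ) * Complex.I * ((m : ℂ) - n) / L) * (((y - L : ℝ)) : ℂ) =
        (2 * Real.pi * Complex.I * m * (y : ℂ) / L + -(2 * Real.pi * Complex.I * n * (y : ℂ) / L)) +
          ((n - m : ℤ) : ℂ) * (2 * Real.pi * Complex.I) from by push_cast; field_simp; ring]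
    rw [Complex.exp_add, Complex.exp_int_mul_two_pi_mul_I, mul_one]]
  rw [show Complex.exp ((2 * Real.pi * Complex.I * ((m : ℂ) - n) / L) * (((-y : ℝ)) : ℂ)) =
      Complex.exp (-(2 * Real.pi * Complex.I * m * (y : ℂ) / L)) *
        Complex.exp (2 * Real.pi * Complex.I * n * (y : ℂ) / L) from by
    rw [← Complex.exp_add]
    congr 1
    push_cast; field_simp; ring]
  rw [show Complex.exp ((2 * Real.pi * Complex.I * ((m : ℂ) - n) / L) * (((-L : ℝ)) : ℂ)) = 1 from by
    rw [show (2 * (Real.pi : ℂ) * Complex.I * ((m : ℂ) - n) / L) * (((-L : ℝ)) : ℂ) =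
        ((n - m : ℤ) : ℂ) * (2 * Real.pi * Complex.I) from by push_cast; field_simp; ring]
    exact Complex.exp_int_mul_two_pi_mul_I _]
  rw [show ((Real.sin (2 * Real.pi * m * y / L) - Real.sin (2 * Real.pi * n * y / L)) /
        (Real.pi * (n - m)) : ℝ) =
      (((Complex.exp (-(2 * Real.pi * Complex.I * m * (y : ℂ) / L)) -
          Complex.exp (2 * Real.pi * Complex.I * m * (y : ℂ) / L)) * Complex.I / 2 -
        (Complex.exp (-(2 * Real.pi * Complex.I * n * (y : ℂ) / L)) -
          Complex.exp (2 * Real.pi * Complex.I * n * (y : ℂ) / L)) * Complex.I / 2) /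
        ((Real.pi : ℂ) * ((n : ℂ) - m)) : ℂ) from by
    push_cast
    rw [show Complex.sin ((2 : ℂ) * Real.pi * m * y / L) =
        (Complex.exp (-(2 * Real.pi * Complex.I * m * (y : ℂ) / L)) -
          Complex.exp (2 * Real.pi * Complex.I * m * (y : ℂ) / L)) * Complex.I / 2 from by
      rw [Complex.sin,
        show -((2:ℂ) * Real.pi * m * y / L) * Complex.I =
          -(2 * Real.pi * Complex.I * m * (y:ℂ) / L) from by ring,
        show ((2:ℂ) * Real.pi * m * y / L) * Complex.I =
          2 * Real.pi * Complex.I * m * (y:ℂ) / L from by ring]]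
    rw [show Complex.sin ((2 : ℂ) * Real.pi * n * y / L) =
        (Complex.exp (-(2 * Real.pi * Complex.I * n * (y : ℂ) / L)) -
          Complex.exp (2 * Real.pi * Complex.I * n * (y : ℂ) / L)) * Complex.I / 2 from by
      rw [Complex.sin,
        show -((2:ℂ) * Real.pi * n * y / L) * Complex.I =
          -(2 * Real.pi * Complex.I * n * (y:ℂ) / L) from by ring,
        show ((2:ℂ) * Real.pi * n * y / L) * Complex.I =
          2 * Real.pi * Complex.I * n * (y:ℂ) / L from by ring]]]
  simp only [Complex.exp_neg]
  exact alg5 (Real.pi : ℂ) (L : ℂ) (m : ℂ) (n : ℂ)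
    (Complex.exp (2 * Real.pi * Complex.I * n * (y : ℂ) / L))
    (Complex.exp (2 * Real.pi * Complex.I * m * (y : ℂ) / L))
    hπ hL0 hmn (Complex.exp_ne_zero _) (Complex.exp_ne_zero _)
end

section
/- Let L > 0 and f ∈ L²([0, L]). Define f^σ : ℝ → ℂ by f^σ(x) = f(x + L/2) for |x| ≤ L/2 and f^σ(x) = 0 otherwise, and let F(f^σ)(s) = ∫_ℝ f^σ(x) e^{−isx} dx. Then for every s ∈ ℝ with Ls/2 ∉ πℤ, the series Σ_{n∈ℤ} f̂(n) / (Ls/2 − nπ) converges absolutely and F(f^σ)(s) = sin(Ls/2) · Σ_{n∈ℤ} f̂(n) / (Ls/2 − nπ), where f̂(n) = ∫_0^L f(x) exp(−2πinx/L) dx. -/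
open MeasureTheory

open Set AddCircle Complex ComplexConjugate
open scoped ENNReal Real InnerProductSpace

theorem memLp_liftIoc (L : ℝ) [hT : Fact (0 < L)] (f : ℝ → ℂ) (hsm : StronglyMeasurable f)
    (hf : MemLp f 2 (volume.restrict (Set.Ioc (0:ℝ) L))) :
    MemLp (AddCircle.liftIoc L 0 f) 2 (@haarAddCircle L hT) := by
  have m : Measurable (fun z : AddCircle L => ((AddCircle.equivIoc L 0 z : ℝ))) :=
    measurable_subtype_coe.comp (AddCircle.measurableEquivIoc L 0).measurable
  have hFsm : StronglyMeasurable (AddCircle.liftIoc L 0 f) := hsm.comp_measurable m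
  have h1 : eLpNorm (AddCircle.liftIoc L 0 f ∘ (QuotientAddGroup.mk : ℝ → AddCircle L)) 2
      (volume.restrict (Set.Ioc (0:ℝ) (0 + L))) = eLpNorm (AddCircle.liftIoc L 0 f) 2 volume :=
    eLpNorm_comp_measurePreserving hFsm.aestronglyMeasurable (AddCircle.measurePreserving_mk L 0)
  have h2 : (AddCircle.liftIoc L 0 f) ∘ (QuotientAddGroup.mk : ℝ → AddCircle L)
      =ᵐ[volume.restrict (Set.Ioc (0:ℝ) (0 + L))] f := by
    filter_upwards [ae_restrict_mem measurableSet_Ioc] with x hx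
    exact AddCircle.liftIoc_coe_apply hx
  have h3 : eLpNorm (AddCircle.liftIoc L 0 f) 2 (volume : Measure (AddCircle L)) < ⊤ := by
    rw [← h1, eLpNorm_congr_ae h2]
    simpa [zero_add] using hf.2
  refine ⟨hFsm.aestronglyMeasurable, ?_⟩
  set c : ℝ≥0∞ := (ENNReal.ofReal L) ^ (1/(2:ℝ≥0∞)).toReal with hc
  have hrw := eLpNorm_smul_measure_of_ne_top (p := 2) (by norm_num)
      (AddCircle.liftIoc L 0 f) (ENNReal.ofReal L) (μ := @haarAddCircle L hT)
  rw [volume_eq_smul_haarAddCircle, hrw, ← hc] at h3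
  have hc0 : c ≠ 0 := by
    rw [hc]
    simp [ENNReal.rpow_eq_zero_iff, ENNReal.ofReal_eq_zero, not_or, not_le, hT.out,
      ENNReal.ofReal_ne_top]
  have hctop : c ≠ ⊤ := ENNReal.rpow_ne_top_of_nonneg (by positivity) ENNReal.ofReal_ne_top
  calc eLpNorm (AddCircle.liftIoc L 0 f) 2 haarAddCircle
      = c⁻¹ * (c • eLpNorm (AddCircle.liftIoc L 0 f) 2 haarAddCircle) := by
        rw [smul_eq_mul, ← mul_assoc, ENNReal.inv_mul_cancel hc0 hctop, one_mul]
    _ < ⊤ := ENNReal.mul_lt_top (ENNReal.inv_lt_top.2 (pos_iff_ne_zero.2 hc0)) h3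
theorem coeff_eq (L : ℝ) [hT : Fact (0 < L)] (f : ℝ → ℂ) (n : ℤ) :
    fourierCoeff (AddCircle.liftIoc L 0 f) n
      = (1/(L:ℂ)) * ∫ x in Set.Icc (0:ℝ) L,
          f x * Complex.exp (-2 * Real.pi * Complex.I * n * x / L) := by
  rw [fourierCoeff_liftIoc_eq, fourierCoeffOn_eq_integral]
  rw [integral_Icc_eq_integral_Ioc]
  rw [intervalIntegral.integral_of_le (by linarith [hT.out] : (0:ℝ) ≤ 0 + L)]
  simp only [zero_add, sub_zero, smul_eq_mul, fourier_coe_apply]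
  rw [Complex.real_smul]
  congr 1
  · push_cast; ring
  · apply setIntegral_congr_fun measurableSet_Ioc
    intro x hx
    rw [mul_comm]
    congr 1
    push_cast
    ring

theorem coeffG (L : ℝ) [hT : Fact (0 < L)] (s : ℝ) (n : ℤ) (hn : L*s/2 ≠ n*Real.pi) :
    fourierCoeff (AddCircle.liftIoc L 0 (fun x : ℝ => Complex.exp (Complex.I*s*x))) n
      = (Complex.exp (Complex.I*s*L) - 1)/(2*Complex.I) / ((L*s/2 - n*Real.pi : ℝ):ℂ) := by
  have hL : (0:ℝ) < L := hT.out
  have hLne : (L:ℂ) ≠ 0 := by exact_mod_cast hL.ne'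
  set c : ℂ := Complex.I * s - 2*Real.pi*Complex.I*n/L with hcdef
  have hden : ((L*s/2 - n*Real.pi : ℝ):ℂ) ≠ 0 := by
    exact_mod_cast sub_ne_zero.2 hn
  have hc2 : c = 2*Complex.I*((L*s/2 - n*Real.pi : ℝ):ℂ)/L := by
    rw [hcdef]; push_cast; field_simp
  have hc : c ≠ 0 := by
    rw [hc2]
    apply div_ne_zero _ hLne
    exact mul_ne_zero (mul_ne_zero two_ne_zero Complex.I_ne_zero) hden
  rw [coeff_eq, integral_Icc_eq_integral_Ioc,
    ← intervalIntegral.integral_of_le hL.le]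
  have hint : ∀ x : ℝ, Complex.exp (Complex.I*s*x) * Complex.exp (-2 * Real.pi * Complex.I * n * x / L)
      = Complex.exp (c * x) := by
    intro x
    rw [← Complex.exp_add]
    congr 1
    rw [hcdef]; push_cast; field_simp; ring
  simp only [hint]
  rw [integral_exp_mul_complex hc]
  have hexp : Complex.exp (c * L) = Complex.exp (Complex.I*s*L) := by
    rw [hcdef]
    have : (Complex.I * ↑s - 2 * ↑Real.pi * Complex.I * ↑n / ↑L) * L
        = Complex.I*s*L - n * (2*Real.pi*Complex.I) := by field_simp
    rw [this, Complex.exp_sub, Complex.exp_int_mul_two_pi_mul_I, div_one]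
  rw [hexp, hc2]
  rw [Complex.ofReal_zero, mul_zero, Complex.exp_zero]
  rw [div_div, div_div_eq_mul_div, ← mul_div_assoc]
  congr 1
  field_simp

theorem core (L : ℝ) (hL : 0 < L) (f : ℝ → ℂ) (hsm : StronglyMeasurable f)
    (hf : MemLp f 2 (volume.restrict (Set.Ioc (0:ℝ) L)))
    (s : ℝ) (hs : ∀ k : ℤ, L * s / 2 ≠ k * Real.pi) :
    Summable (fun n : ℤ =>
      ‖(∫ x in Set.Icc (0 : ℝ) L, f x * Complex.exp (-2 * Real.pi * Complex.I * n * x / L)) /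
          ((L * s / 2 - n * Real.pi : ℝ) : ℂ)‖) ∧
    HasSum (fun n : ℤ =>
      (∫ x in Set.Icc (0 : ℝ) L, f x * Complex.exp (-2 * Real.pi * Complex.I * n * x / L)) /
          ((L * s / 2 - n * Real.pi : ℝ) : ℂ))
      ((2*Complex.I/(1 - Complex.exp (-Complex.I * s * L))) *
        ∫ x in Set.Ioc (0:ℝ) L, Complex.exp (-Complex.I * s * x) * f x) := by
  haveI : Fact (0 < L) := ⟨hL⟩
  haveI : IsFiniteMeasure (volume.restrict (Set.Ioc (0:ℝ) L)) :=
    ⟨by simp [Real.volume_Ioc]⟩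
  have hLne : (L:ℂ) ≠ 0 := by exact_mod_cast hL.ne'
  set g : ℝ → ℂ := fun x => Complex.exp (Complex.I*s*x) with hg
  have hgsm : StronglyMeasurable g := by
    apply Continuous.stronglyMeasurable; fun_prop
  have hg2 : MemLp g 2 (volume.restrict (Set.Ioc (0:ℝ) L)) := by
    refine MemLp.of_bound hgsm.aestronglyMeasurable 1 ?_
    filter_upwards with x
    simp [hg, Complex.norm_exp]
  set F := AddCircle.liftIoc L 0 f with hF
  set G := AddCircle.liftIoc L 0 g with hG
  have hF2 : MemLp F 2 haarAddCircle := memLp_liftIoc L f hsm hf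
  have hG2 : MemLp G 2 haarAddCircle := memLp_liftIoc L g hgsm hg2
  set FLp := hF2.toLp F with hFLp
  set GLp := hG2.toLp G with hGLp
  set Eb : ℂ := Complex.exp (-Complex.I*s*L) with hEb
  set K : ℂ := (1 - Eb)/(2*Complex.I)/L with hK
  set A : ℤ → ℂ := fun n =>
      (∫ x in Set.Icc (0 : ℝ) L, f x * Complex.exp (-2 * Real.pi * Complex.I * n * x / L)) /
          ((L * s / 2 - n * Real.pi : ℝ) : ℂ) with hA
  -- coefficients
  have hcoeffF : ∀ n : ℤ, ⟪fourierBasis n, FLp⟫_ℂ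
      = (1/(L:ℂ)) * ∫ x in Set.Icc (0:ℝ) L,
          f x * Complex.exp (-2 * Real.pi * Complex.I * n * x / L) := by
    intro n
    rw [← fourierBasis.repr_apply_apply, fourierBasis_repr, ← coeff_eq]
    refine integral_congr_ae ?_
    filter_upwards [hF2.coeFn_toLp] with z hz
    simp only [hFLp]
    rw [hz]
  have hconjG : ∀ n : ℤ, ⟪GLp, fourierBasis n⟫_ℂ
      = (1 - Eb)/(2*Complex.I) / ((L * s / 2 - n * Real.pi : ℝ) : ℂ) := by
    intro n
    rw [← inner_conj_symm, ← fourierBasis.repr_apply_apply, fourierBasis_repr]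
    have hae : fourierCoeff (GLp : AddCircle L → ℂ) n = fourierCoeff G n := by
      refine integral_congr_ae ?_
      filter_upwards [hG2.coeFn_toLp] with z hz
      simp only [hGLp]
      rw [hz]
    rw [hae, hG, hg, coeffG L s n (hs n)]
    rw [map_div₀, map_div₀, Complex.conj_ofReal, map_mul, map_sub, map_one]
    rw [← Complex.exp_conj]
    simp only [map_mul, Complex.conj_I, Complex.conj_ofReal, map_ofNat]
    rw [hEb]
    ring_nf
  have hdne : ∀ n : ℤ, ((L * s / 2 - n * Real.pi : ℝ) : ℂ) ≠ 0 := fun n => by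
    exact_mod_cast sub_ne_zero.2 (hs n)
  have hterm : ∀ n : ℤ, ⟪GLp, fourierBasis n⟫_ℂ * ⟪fourierBasis n, FLp⟫_ℂ = K * A n := by
    intro n
    rw [hconjG, hcoeffF, hK, hA]
    field_simp
  -- inner product value
  set J : ℂ := ∫ x in Set.Ioc (0:ℝ) L, Complex.exp (-Complex.I * s * x) * f x with hJ
  have hinner : ⟪GLp, FLp⟫_ℂ = (1/(L:ℂ)) * J := by
    have h1 : ⟪GLp, FLp⟫_ℂ = ∫ z, conj (G z) * F z ∂haarAddCircle := by
      rw [MeasureTheory.L2.inner_def]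
      refine integral_congr_ae ?_
      filter_upwards [hF2.coeFn_toLp, hG2.coeFn_toLp] with z hzF hzG
      simp only [hFLp, hGLp, RCLike.inner_apply]
      rw [hzF, hzG, mul_comm]
    have h2 := AddCircle.integral_preimage L 0 (fun z : AddCircle L => conj (G z) * F z)
    rw [volume_eq_smul_haarAddCircle, integral_smul_measure,
      ENNReal.toReal_ofReal hL.le] at h2
    have h3 : (∫ x in Set.Ioc (0:ℝ) (0+L),
        (fun z : AddCircle L => conj (G z) * F z) ↑x) = J := by
      rw [hJ, zero_add]
      refine setIntegral_congr_fun measurableSet_Ioc (fun x hx => ?_)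
      have hx' : x ∈ Set.Ioc (0:ℝ) (0+L) := by simpa using hx
      simp only [hF, hG]
      rw [AddCircle.liftIoc_coe_apply hx', AddCircle.liftIoc_coe_apply hx']
      congr 1
      rw [hg, ← Complex.exp_conj]
      congr 1
      simp
    rw [h3] at h2
    rw [h1, h2, Complex.real_smul, ← mul_assoc, one_div,
      inv_mul_cancel₀ hLne, one_mul]
  have hps : HasSum (fun n : ℤ => K * A n) ((1/(L:ℂ)) * J) := by
    have h := fourierBasis.hasSum_inner_mul_inner GLp FLp
    rw [hinner] at h
    simp_rw [hterm] at h
    exact h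
  -- K ≠ 0
  have hEbne : Eb ≠ 1 := by
    rw [hEb]; intro h
    rw [Complex.exp_eq_one_iff] at h
    obtain ⟨n, hn⟩ := h
    have h2 : Complex.I * (-(s*L):ℝ) = Complex.I * ((2*Real.pi*n:ℝ):ℂ) := by
      push_cast
      linear_combination hn
    have h3 := mul_left_cancel₀ Complex.I_ne_zero h2
    have h4 : -(s*L) = 2*Real.pi*n := by exact_mod_cast h3
    exact hs (-n) (by push_cast; linarith)
  have hKne : K ≠ 0 := by
    rw [hK]
    exact div_ne_zero (div_ne_zero (sub_ne_zero.2 (Ne.symm hEbne))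
      (mul_ne_zero two_ne_zero Complex.I_ne_zero)) hLne
  constructor
  · -- summability of norms
    have hAn : ∀ n : ℤ, A n = K⁻¹ * (⟪GLp, fourierBasis n⟫_ℂ * ⟪fourierBasis n, FLp⟫_ℂ) := by
      intro n
      rw [hterm n, ← mul_assoc, inv_mul_cancel₀ hKne, one_mul]
    have hnormG : ∀ n : ℤ, ‖⟪GLp, fourierBasis n⟫_ℂ‖ = ‖fourierBasis.repr GLp n‖ := by
      intro n
      rw [← inner_conj_symm, ← fourierBasis.repr_apply_apply, RCLike.norm_conj]
    have hnormF : ∀ n : ℤ, ‖⟪fourierBasis n, FLp⟫_ℂ‖ = ‖fourierBasis.repr FLp n‖ := by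
      intro n
      rw [← fourierBasis.repr_apply_apply]
    have hsq : ∀ (v : Lp ℂ 2 (@haarAddCircle L ⟨hL⟩)),
        Summable (fun n : ℤ => ‖fourierBasis.repr v n‖^2) := by
      intro v
      have hm : Memℓp (fun n => fourierBasis.repr v n) 2 := (fourierBasis.repr v).property
      have h2 := (memℓp_gen_iff (by norm_num : 0 < (2:ℝ≥0∞).toReal)).1 hm
      rw [show ((2:ℝ≥0∞)).toReal = ((2:ℕ):ℝ) by norm_num] at h2
      refine h2.congr fun n => ?_
      rw [Real.rpow_natCast]
    refine Summable.of_nonneg_of_le (fun n => norm_nonneg _) (fun n => ?_)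
      (((hsq GLp).add (hsq FLp)).mul_left (‖K⁻¹‖/2))
    show ‖A n‖ ≤ ‖K⁻¹‖/2 * (‖fourierBasis.repr GLp n‖^2 + ‖fourierBasis.repr FLp n‖^2)
    rw [hAn n, norm_mul, norm_mul, hnormG, hnormF]
    have h1 := two_mul_le_add_sq ‖fourierBasis.repr GLp n‖ ‖fourierBasis.repr FLp n‖
    have h2 : (0:ℝ) ≤ ‖K⁻¹‖ := norm_nonneg _
    nlinarith [norm_nonneg (fourierBasis.repr GLp n), norm_nonneg (fourierBasis.repr FLp n)]
  · -- the HasSum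
    have h := hps.mul_left K⁻¹
    have hval : K⁻¹ * ((1/(L:ℂ)) * J) = (2*Complex.I/(1 - Eb)) * J := by
      rw [hK]
      have hne1 : (1:ℂ) - Eb ≠ 0 := sub_ne_zero.2 (Ne.symm hEbne)
      field_simp
    rw [hval] at h
    refine (h.congr_fun ?_)
    intro n
    rw [← mul_assoc, inv_mul_cancel₀ hKne, one_mul]

/-- Shannon sampling reformulation. For `f ∈ L²([0, L])`, with
`f^σ(x) = f(x + L/2)` on `[-L/2, L/2]` extended by zero, for every real `s` with
`Ls/2 ∉ πℤ`, the series `∑_{n ∈ ℤ} f̂(n)/(Ls/2 - nπ)` converges absolutely and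
`F(f^σ)(s) = sin(Ls/2) ∑_{n ∈ ℤ} f̂(n)/(Ls/2 - nπ)`. -/
theorem stmt8 (L : ℝ) (hL : 0 < L) (f : ℝ → ℂ)
    (hf : MemLp f 2 (volume.restrict (Set.Icc (0 : ℝ) L)))
    (s : ℝ) (hs : ∀ k : ℤ, L * s / 2 ≠ k * Real.pi) :
    Summable (fun n : ℤ =>
      ‖(∫ x in Set.Icc (0 : ℝ) L, f x * Complex.exp (-2 * Real.pi * Complex.I * n * x / L)) /
          ((L * s / 2 - n * Real.pi : ℝ) : ℂ)‖) ∧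
    (∫ x : ℝ, (if |x| ≤ L / 2 then f (x + L / 2) else 0) * Complex.exp (-Complex.I * s * x)) =
      (Real.sin (L * s / 2) : ℂ) *
        ∑' n : ℤ,
          (∫ x in Set.Icc (0 : ℝ) L, f x * Complex.exp (-2 * Real.pi * Complex.I * n * x / L)) /
            ((L * s / 2 - n * Real.pi : ℝ) : ℂ) := by
  haveI : Fact (0 < L) := ⟨hL⟩
  set f' := (hf.1).mk f with hf'def
  have hsm' : StronglyMeasurable f' := (hf.1).stronglyMeasurable_mk
  have hae : f =ᵐ[volume.restrict (Set.Icc (0:ℝ) L)] f' := (hf.1).ae_eq_mk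
  have haeIoc : f =ᵐ[volume.restrict (Set.Ioc (0:ℝ) L)] f' :=
    hae.filter_mono (ae_mono (Measure.restrict_mono Set.Ioc_subset_Icc_self le_rfl))
  have hf'2 : MemLp f' 2 (volume.restrict (Set.Ioc (0:ℝ) L)) :=
    (hf.mono_measure (Measure.restrict_mono Set.Ioc_subset_Icc_self le_rfl)).ae_eq haeIoc
  have hcore := core L hL f' hsm' hf'2 s hs
  have hcoeq : ∀ n : ℤ,
      (∫ x in Set.Icc (0:ℝ) L, f x * Complex.exp (-2 * Real.pi * Complex.I * n * x / L))
      = ∫ x in Set.Icc (0:ℝ) L, f' x * Complex.exp (-2 * Real.pi * Complex.I * n * x / L) := by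
    intro n
    refine integral_congr_ae (hae.mono fun x hx =>
      show f x * _ = f' x * _ by rw [hx])
  constructor
  · refine hcore.1.congr fun n => ?_
    rw [hcoeq n]
  · -- rewrite the tsum via core
    have htsum : (∑' n : ℤ,
        (∫ x in Set.Icc (0 : ℝ) L, f x * Complex.exp (-2 * Real.pi * Complex.I * n * x / L)) /
            ((L * s / 2 - n * Real.pi : ℝ) : ℂ))
        = (2*Complex.I/(1 - Complex.exp (-Complex.I * s * L))) *
          ∫ x in Set.Ioc (0:ℝ) L, Complex.exp (-Complex.I * s * x) * f' x := by
      rw [← hcore.2.tsum_eq]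
      exact tsum_congr fun n => by rw [hcoeq n]
    rw [htsum]
    -- LHS computation
    set J : ℂ := ∫ x in Set.Ioc (0:ℝ) L, Complex.exp (-Complex.I * s * x) * f' x with hJ
    have hJf : J = ∫ x in Set.Ioc (0:ℝ) L, Complex.exp (-Complex.I * s * x) * f x := by
      rw [hJ]
      exact integral_congr_ae (haeIoc.mono fun x hx =>
        show Complex.exp _ * f' x = Complex.exp _ * f x by rw [hx])
    set w : ℂ := Complex.exp (Complex.I * s * (L/2)) with hw
    have hLHS : (∫ x : ℝ, (if |x| ≤ L / 2 then f (x + L / 2) else 0) *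
        Complex.exp (-Complex.I * s * x)) = w * J := by
      have hind : (fun x : ℝ => (if |x| ≤ L / 2 then f (x + L / 2) else 0) *
          Complex.exp (-Complex.I * s * x))
          = Set.indicator (Set.Icc (-(L/2)) (L/2))
              (fun x => f (x + L / 2) * Complex.exp (-Complex.I * s * x)) := by
        funext x
        rw [Set.indicator_apply]
        by_cases h : |x| ≤ L/2
        · rw [if_pos h, if_pos (by rwa [Set.mem_Icc, ← abs_le])]
        · rw [if_neg h, if_neg (by rwa [Set.mem_Icc, ← abs_le]), zero_mul]
      rw [hind]
      have hshift : (∫ x : ℝ, Set.indicator (Set.Icc (-(L/2)) (L/2))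
          (fun x => f (x + L / 2) * Complex.exp (-Complex.I * s * x)) x)
          = ∫ y : ℝ, Set.indicator (Set.Icc (-(L/2)) (L/2))
            (fun x => f (x + L / 2) * Complex.exp (-Complex.I * s * x)) (y - L/2) := by
        exact (integral_sub_right_eq_self (fun y => Set.indicator (Set.Icc (-(L/2)) (L/2))
            (fun x => f (x + L / 2) * Complex.exp (-Complex.I * s * x)) y) (L/2)).symm
      rw [hshift]
      have hind2 : (fun y : ℝ => Set.indicator (Set.Icc (-(L/2)) (L/2))
          (fun x => f (x + L / 2) * Complex.exp (-Complex.I * s * x)) (y - L/2))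
          = Set.indicator (Set.Icc (0:ℝ) L)
              (fun y => f y * Complex.exp (-Complex.I * s * (y - L/2))) := by
        funext y
        rw [Set.indicator_apply, Set.indicator_apply]
        by_cases h : y ∈ Set.Icc (0:ℝ) L
        · rw [if_pos (by simp only [Set.mem_Icc] at h ⊢; constructor <;> linarith [h.1, h.2]),
            if_pos h]
          push_cast
          ring_nf
        · rw [if_neg (by simp only [Set.mem_Icc] at h ⊢; intro hc; exact h ⟨by linarith [hc.1], by linarith [hc.2]⟩), if_neg h]
      rw [hind2, integral_indicator measurableSet_Icc, integral_Icc_eq_integral_Ioc, hJf,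
        ← integral_const_mul]
      refine setIntegral_congr_fun measurableSet_Ioc fun x hx => ?_
      rw [hw, show -Complex.I * s * ((x:ℝ) - (L:ℝ)/2)
          = Complex.I * s * (L/2) + (-Complex.I * s * x) by push_cast; ring,
        Complex.exp_add]
      ring
    rw [hLHS]
    -- constant identity
    have hEbne : Complex.exp (-Complex.I*s*L) ≠ 1 := by
      intro h
      rw [Complex.exp_eq_one_iff] at h
      obtain ⟨n, hn⟩ := h
      have h2 : Complex.I * (-(s*L):ℝ) = Complex.I * ((2*Real.pi*n:ℝ):ℂ) := by
        push_cast
        linear_combination hn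
      have h3 := mul_left_cancel₀ Complex.I_ne_zero h2
      have h4 : -(s*L) = 2*Real.pi*n := by exact_mod_cast h3
      exact hs (-n) (by push_cast; linarith)
    have hne1 : (1:ℂ) - Complex.exp (-Complex.I*s*L) ≠ 0 := sub_ne_zero.2 (Ne.symm hEbne)
    have hww : Complex.exp (-Complex.I*s*L) * (w * w) = 1 := by
      rw [hw, ← Complex.exp_add, ← Complex.exp_add]
      rw [show -Complex.I*s*L + (Complex.I * s * (L/2) + Complex.I * s * (L/2)) = 0 by ring]
      exact Complex.exp_zero
    have hsin : (Real.sin (L * s / 2) : ℂ) * (2*Complex.I/(1 - Complex.exp (-Complex.I*s*L))) = w := by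
      rw [Complex.ofReal_sin, Complex.sin]
      have h1 : Complex.exp (-(L*s/2:ℝ) * Complex.I) = Complex.exp (-Complex.I*s*L) * w := by
        rw [hw, ← Complex.exp_add]
        congr 1
        push_cast
        ring
      have h2 : Complex.exp ((L*s/2:ℝ) * Complex.I) = w := by
        rw [hw]
        congr 1
        push_cast
        ring
      rw [h1, h2]
      have key : ((Complex.exp (-Complex.I*s*L) * w - w) * Complex.I / 2) * (2 * Complex.I)
          = w * (1 - Complex.exp (-Complex.I*s*L)) := by
        linear_combination (Complex.exp (-Complex.I*s*L) * w - w) * Complex.I_mul_I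
      rw [← mul_div_assoc, key, mul_div_assoc, div_self hne1, mul_one]
    rw [← mul_assoc, hsin]
end

section
/- Let N ∈ ℕ and let Q = (q_{i,j}), i, j ∈ {−N, …, N}, be the real matrix with q_{i,i} = a_i and q_{i,j} = (b_i − b_j)/(i − j) for i ≠ j, where a_{−i} = a_i and b_{−i} = −b_i. Let γ(e_j) = e_{−j}, D(e_j) = j·e_j, β = Σ_j b_j e_j, η = Σ_j e_j. Assume Q is positive semidefinite and ξ ∈ ℝ^{2N+1} satisfies Qξ = 0, γξ = ξ, and ⟨ξ, η⟩ = 1. Then Q D ξ = −β. -/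
/-- The index set `{-N, …, N}` as a subtype of `ℤ`. -/
abbrev Idx (N : ℕ) := {i : ℤ // i ∈ Finset.Icc (-(N : ℤ)) N}

/-- Negation on the index set `{-N, …, N}`. -/
def negIdx {N : ℕ} (i : Idx N) : Idx N :=
  ⟨-i.1, by
    have := Finset.mem_Icc.mp i.2
    exact Finset.mem_Icc.mpr ⟨by omega, by omega⟩⟩

/-- With `Q` of the standard form (`a` even, `b` odd), `Q` positive
semidefinite, `Qξ = 0`, `γξ = ξ`, `⟨ξ, η⟩ = 1` (`η = ∑ e_j`), one has `Q D ξ = -β`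
where `β = ∑ b_j e_j` and `D e_j = j e_j`. -/
theorem stmt10 (N : ℕ) (a b : Idx N → ℝ)
    (ha : ∀ i, a (negIdx i) = a i) (hb : ∀ i, b (negIdx i) = -b i)
    (Q : Matrix (Idx N) (Idx N) ℝ)
    (hQdiag : ∀ i, Q i i = a i)
    (hQoff : ∀ i j, i ≠ j → Q i j = (b i - b j) / ((i.1 - j.1 : ℤ) : ℝ))
    (hpsd : Q.PosSemidef)
    (D : Matrix (Idx N) (Idx N) ℝ)
    (hD : D = Matrix.diagonal fun i => ((i.1 : ℤ) : ℝ))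
    (ξ : Idx N → ℝ) (hker : Q.mulVec ξ = 0)
    (heven : ∀ i, ξ (negIdx i) = ξ i)
    (hnorm : ∑ i : Idx N, ξ i = 1) :
    Q.mulVec (D.mulVec ξ) = -b := by
  -- the equivalence given by negation
  have hinv : Function.Involutive (negIdx (N := N)) := fun i => by
    simp [negIdx]
  let E : Equiv.Perm (Idx N) := ⟨negIdx, negIdx, hinv, hinv⟩
  -- ∑ b j ξ j = 0 by symmetry
  have hsum0 : ∑ j : Idx N, b j * ξ j = 0 := by
    have h1 : ∑ j : Idx N, b (E j) * ξ (E j) = ∑ j : Idx N, b j * ξ j :=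
      Equiv.sum_comp E fun j => b j * ξ j
    have h2 : ∀ j : Idx N, b (E j) * ξ (E j) = -(b j * ξ j) := by
      intro j
      show b (negIdx j) * ξ (negIdx j) = _
      rw [hb, heven]; ring
    rw [Finset.sum_congr rfl fun j _ => h2 j, Finset.sum_neg_distrib] at h1
    linarith
  funext i
  have hQξ : ∑ j : Idx N, Q i j * ξ j = 0 := by
    have := congrFun hker i
    simpa [Matrix.mulVec, dotProduct] using this
  have key : ∀ j : Idx N, Q i j * ((j.1 : ℝ) * ξ j)
      = Q i j * (i.1 : ℝ) * ξ j - (b i - b j) * ξ j := by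
    intro j
    rcases eq_or_ne i j with rfl | hij
    · ring
    · have hne : ((i.1 - j.1 : ℤ) : ℝ) ≠ 0 := by
        have : i.1 ≠ j.1 := fun h => hij (Subtype.ext h)
        exact_mod_cast sub_ne_zero.mpr this
      have hc : ((i.1 - j.1 : ℤ) : ℝ) = ((i.1 : ℤ) : ℝ) - ((j.1 : ℤ) : ℝ) := by
        push_cast; ring
      have hne' : ((i.1 : ℤ) : ℝ) - ((j.1 : ℤ) : ℝ) ≠ 0 := hc ▸ hne
      rw [hQoff i j hij, hc]
      field_simp
      ring
  have hDv : D.mulVec ξ = fun j => ((j.1 : ℤ) : ℝ) * ξ j := by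
    funext j
    rw [hD]
    exact Matrix.mulVec_diagonal _ _ _
  have : (Q.mulVec (D.mulVec ξ)) i = ∑ j : Idx N, Q i j * ((j.1 : ℝ) * ξ j) := by
    rw [hDv]
    simp [Matrix.mulVec, dotProduct]
  rw [this, Finset.sum_congr rfl fun j _ => key j, Finset.sum_sub_distrib]
  have e1 : ∑ j : Idx N, Q i j * (i.1 : ℝ) * ξ j
      = (i.1 : ℝ) * ∑ j : Idx N, Q i j * ξ j := by
    rw [Finset.mul_sum]; exact Finset.sum_congr rfl fun j _ => by ring
  have e2 : ∑ j : Idx N, (b i - b j) * ξ j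
      = b i * (∑ j : Idx N, ξ j) - ∑ j : Idx N, b j * ξ j := by
    rw [Finset.mul_sum, ← Finset.sum_sub_distrib]
    exact Finset.sum_congr rfl fun j _ => by ring
  rw [e1, e2, hQξ, hsum0, hnorm]
  simp
end

section
/- Let N ∈ ℕ and let Q = (q_{i,j}), i, j ∈ {−N, …, N}, be the real matrix with q_{i,i} = a_i and q_{i,j} = (b_i − b_j)/(i − j) for i ≠ j, where a_{−i} = a_i and b_{−i} = −b_i. Let γ(e_j) = e_{−j}, D(e_j) = j·e_j, η = Σ_j e_j. Assume Q is positive semidefinite and ξ satisfies Qξ = 0, γξ = ξ, ⟨ξ, η⟩ = 1. Define D' := D − |Dξ⟩⟨η|. Then D' is selfadjoint with respect to the bilinear form defined by Q, i.e. ⟨Q D' f, g⟩ = ⟨Q f, D' g⟩ for all vectors f, g. -/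
/-- With `Q` of the standard form (`a` even, `b` odd), `Q` positive
semidefinite, `Qξ = 0`, `γξ = ξ`, `⟨ξ, η⟩ = 1`, the operator `D' = D - |Dξ⟩⟨η|` is
selfadjoint for the bilinear form given by `Q`: `⟨Q D' f, g⟩ = ⟨Q f, D' g⟩` for all `f, g`. -/
theorem stmt11 (N : ℕ) (a b : Idx N → ℝ)
    (ha : ∀ i, a (negIdx i) = a i) (hb : ∀ i, b (negIdx i) = -b i)
    (Q : Matrix (Idx N) (Idx N) ℝ)
    (hQdiag : ∀ i, Q i i = a i)
    (hQoff : ∀ i j, i ≠ j → Q i j = (b i - b j) / ((i.1 - j.1 : ℤ) : ℝ))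
    (hpsd : Q.PosSemidef)
    (D : Matrix (Idx N) (Idx N) ℝ)
    (hD : D = Matrix.diagonal fun i => ((i.1 : ℤ) : ℝ))
    (ξ : Idx N → ℝ) (hker : Q.mulVec ξ = 0)
    (heven : ∀ i, ξ (negIdx i) = ξ i)
    (hnorm : ∑ i : Idx N, ξ i = 1)
    (D' : Matrix (Idx N) (Idx N) ℝ)
    (hD' : D' = D - Matrix.vecMulVec (D.mulVec ξ) fun _ => 1) :
    ∀ f g : Idx N → ℝ,
      dotProduct (Q.mulVec (D'.mulVec f)) g =
        dotProduct (Q.mulVec f) (D'.mulVec g) := by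
  -- Q is symmetric, and the key off-diagonal identity
  have key : ∀ i j : Idx N, Q i j * (((j.1 : ℤ) : ℝ) - ((i.1 : ℤ) : ℝ)) = b j - b i := by
    intro i j
    by_cases h : i = j
    · subst h; ring
    · rw [hQoff i j h]
      have hne : ((i.1 : ℝ)) - (j.1 : ℝ) ≠ 0 := by
        have : i.1 ≠ j.1 := fun hh => h (Subtype.ext hh)
        have : (i.1 : ℝ) ≠ (j.1 : ℝ) := by exact_mod_cast this
        exact sub_ne_zero.mpr this
      push_cast
      field_simp
      ring
  have hsymm : ∀ i j : Idx N, Q i j = Q j i := by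
    intro i j
    by_cases h : i = j
    · rw [h]
    · rw [hQoff i j h, hQoff j i (Ne.symm h)]
      have hne : ((i.1 : ℝ)) - (j.1 : ℝ) ≠ 0 := by
        have : i.1 ≠ j.1 := fun hh => h (Subtype.ext hh)
        have : (i.1 : ℝ) ≠ (j.1 : ℝ) := by exact_mod_cast this
        exact sub_ne_zero.mpr this
      have hne' : ((j.1 : ℝ)) - (i.1 : ℝ) ≠ 0 := by
        intro hc; apply hne; linarith
      push_cast
      field_simp
      ring
  set c := ∑ k : Idx N, b k * ξ k with hc
  have hQDξ : ∀ i, Q.mulVec (D.mulVec ξ) i = c - b i := by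
    intro i
    have h0 : Q.mulVec ξ i = 0 := congrFun hker i
    have hDξ : D.mulVec ξ = fun j => ((j.1 : ℤ) : ℝ) * ξ j := by
      ext j; rw [hD, Matrix.mulVec_diagonal]
    rw [hDξ]
    simp only [Matrix.mulVec, dotProduct] at h0 ⊢
    have step : ∀ j : Idx N, Q i j * (((j.1 : ℤ) : ℝ) * ξ j)
        = (b j - b i) * ξ j + ((i.1 : ℤ) : ℝ) * (Q i j * ξ j) := by
      intro j; rw [← key i j]; ring
    calc ∑ j : Idx N, Q i j * (((j.1 : ℤ) : ℝ) * ξ j)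
        = ∑ j : Idx N, ((b j - b i) * ξ j + ((i.1 : ℤ) : ℝ) * (Q i j * ξ j)) :=
          Finset.sum_congr rfl (fun j _ => step j)
      _ = (∑ j : Idx N, (b j - b i) * ξ j) + ((i.1 : ℤ) : ℝ) * ∑ j : Idx N, Q i j * ξ j := by
          rw [Finset.sum_add_distrib, Finset.mul_sum]
      _ = ∑ j : Idx N, (b j - b i) * ξ j := by rw [h0]; ring
      _ = (∑ j : Idx N, b j * ξ j) - b i * ∑ j : Idx N, ξ j := by
          rw [Finset.mul_sum, ← Finset.sum_sub_distrib]; congr 1; ext j; ring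
      _ = c - b i := by rw [hnorm, hc]; ring
  -- entries of Q * D'
  have hQD' : ∀ i j, (Q * D') i j = Q i j * ((j.1 : ℤ) : ℝ) - (c - b i) := by
    intro i j
    rw [hD', Matrix.mul_sub]
    have h1 : (Q * D) i j = Q i j * ((j.1 : ℤ) : ℝ) := by
      rw [hD, Matrix.mul_diagonal]
    have h2 : (Q * Matrix.vecMulVec (D.mulVec ξ) fun _ => 1) i j
        = Q.mulVec (D.mulVec ξ) i := by
      simp [Matrix.mul_apply, Matrix.vecMulVec_apply, Matrix.mulVec, dotProduct,
        mul_comm]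
    simp only [Matrix.sub_apply, h1, h2, hQDξ i]
  have hMsymm : ∀ i j, (Q * D') i j = (Q * D') j i := by
    intro i j
    rw [hQD' i j, hQD' j i]
    have := key i j
    rw [hsymm i j] at *
    nlinarith [key i j, hsymm i j]
  intro f g
  have e1 : Q.mulVec (D'.mulVec f) = (Q * D').mulVec f := Matrix.mulVec_mulVec f Q D'
  have e2 : Q.mulVec (D'.mulVec g) = (Q * D').mulVec g := Matrix.mulVec_mulVec g Q D'
  have swap : ∀ (M : Matrix (Idx N) (Idx N) ℝ), (∀ i j, M i j = M j i) →
      ∀ u v : Idx N → ℝ, dotProduct (M.mulVec u) v = dotProduct u (M.mulVec v) := by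
    intro M hM u v
    simp only [dotProduct, Matrix.mulVec, Finset.sum_mul, Finset.mul_sum]
    rw [Finset.sum_comm]
    refine Finset.sum_congr rfl fun i _ => Finset.sum_congr rfl fun j _ => ?_
    rw [hM j i]; ring
  calc dotProduct (Q.mulVec (D'.mulVec f)) g
      = dotProduct ((Q * D').mulVec f) g := by rw [e1]
    _ = dotProduct f ((Q * D').mulVec g) := swap _ hMsymm f g
    _ = dotProduct f (Q.mulVec (D'.mulVec g)) := by rw [e2]
    _ = dotProduct (Q.mulVec f) (D'.mulVec g) := by
        rw [swap Q hsymm f (D'.mulVec g)]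
end

section
/- Let N ∈ ℕ and let Q = (q_{i,j}), i, j ∈ {−N, …, N}, be the real matrix with q_{i,i} = a_i and q_{i,j} = (b_i − b_j)/(i − j) for i ≠ j, where a_{−i} = a_i and b_{−i} = −b_i. Let γ(e_j) = e_{−j}, D(e_j) = j·e_j, η = Σ_j e_j. Assume Q is positive semidefinite, Qξ = 0, γξ = ξ, ⟨ξ, η⟩ = 1, and set D' := D − |Dξ⟩⟨η|. Then for every s ∈ ℂ \ {−N, …, N} one has det(D' − s·Id) = −s · (∏_{i=−N}^{N} (i − s)) · (Σ_{j=−N}^{N} ξ_j / (j − s)); in particular, for such s, det(D' − s·Id) = 0 if and only if Σ_{j=−N}^{N} ξ_j / (s − j) = 0. -/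
/-- With `Q` of the standard form, `Q` PSD, `Qξ = 0`, `γξ = ξ`,
`⟨ξ, η⟩ = 1`, and `D' = D - |Dξ⟩⟨η|`, for every `s ∈ ℂ \ {-N, …, N}` one has
`det(D' - s·Id) = -s ∏_i (i - s) ∑_j ξ_j/(j - s)`; in particular `det(D' - s·Id) = 0`
iff `∑_j ξ_j/(s - j) = 0`. -/
theorem stmt12 (N : ℕ) (a b : Idx N → ℝ)
    (ha : ∀ i, a (negIdx i) = a i) (hb : ∀ i, b (negIdx i) = -b i)
    (Q : Matrix (Idx N) (Idx N) ℝ)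
    (hQdiag : ∀ i, Q i i = a i)
    (hQoff : ∀ i j, i ≠ j → Q i j = (b i - b j) / ((i.1 - j.1 : ℤ) : ℝ))
    (hpsd : Q.PosSemidef)
    (D : Matrix (Idx N) (Idx N) ℝ)
    (hD : D = Matrix.diagonal fun i => ((i.1 : ℤ) : ℝ))
    (ξ : Idx N → ℝ) (hker : Q.mulVec ξ = 0)
    (heven : ∀ i, ξ (negIdx i) = ξ i)
    (hnorm : ∑ i : Idx N, ξ i = 1)
    (D' : Matrix (Idx N) (Idx N) ℝ)
    (hD' : D' = D - Matrix.vecMulVec (D.mulVec ξ) fun _ => 1)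
    (s : ℂ) (hs : ∀ j : Idx N, s ≠ ((j.1 : ℤ) : ℂ)) :
    Matrix.det ((D'.map fun x : ℝ => (x : ℂ)) - s • (1 : Matrix (Idx N) (Idx N) ℂ)) =
        -s * (∏ i : Idx N, (((i.1 : ℤ) : ℂ) - s)) * ∑ j : Idx N, (ξ j : ℂ) / (((j.1 : ℤ) : ℂ) - s) ∧
      (Matrix.det ((D'.map fun x : ℝ => (x : ℂ)) - s • (1 : Matrix (Idx N) (Idx N) ℂ)) = 0 ↔
        ∑ j : Idx N, (ξ j : ℂ) / (s - ((j.1 : ℤ) : ℂ)) = 0) := by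
  classical
  subst hD hD'
  -- abbreviations
  set d : Idx N → ℂ := fun i => ((i.1 : ℤ) : ℂ) - s with hd
  have hdne : ∀ i, d i ≠ 0 := fun i => sub_ne_zero.mpr fun h => (hs i) h.symm
  have hs0 : s ≠ 0 := by
    have h0 : (0 : ℤ) ∈ Finset.Icc (-(N : ℤ)) N := by
      simp [Finset.mem_Icc]
    have := hs ⟨0, h0⟩
    simpa using this
  set u : Idx N → ℂ := fun i => -(((i.1 : ℤ) : ℂ) * (ξ i : ℂ)) with hu
  have hM : ((((Matrix.diagonal fun i : Idx N => ((i.1 : ℤ) : ℝ)) -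
        Matrix.vecMulVec ((Matrix.diagonal fun i : Idx N => ((i.1 : ℤ) : ℝ)).mulVec ξ)
          fun _ => 1).map fun x : ℝ => (x : ℂ)) - s • (1 : Matrix (Idx N) (Idx N) ℂ)) =
      Matrix.diagonal d + Matrix.replicateCol Unit u * Matrix.replicateRow Unit (fun _ => (1:ℂ)) := by
    ext i j
    simp only [Matrix.sub_apply, Matrix.map_apply, Matrix.add_apply, Matrix.smul_apply,
      Matrix.one_apply, Matrix.diagonal_apply, Matrix.vecMulVec_apply, Matrix.mulVec_diagonal,
      Matrix.mul_apply, Matrix.replicateCol_apply, Matrix.replicateRow_apply, Finset.univ_unique,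
      Finset.sum_singleton, hd, hu]
    by_cases h : i = j <;> simp [h] <;> ring
  have hdet : (Matrix.diagonal d).det = ∏ i : Idx N, (((i.1 : ℤ) : ℂ) - s) := by
    simp [Matrix.det_diagonal, hd]
  have hdetne : (Matrix.diagonal d).det ≠ 0 := by
    rw [Matrix.det_diagonal]
    exact Finset.prod_ne_zero_iff.mpr fun i _ => hdne i
  have hinv : (Matrix.diagonal d)⁻¹ = Matrix.diagonal fun i => (d i)⁻¹ := by
    refine Matrix.inv_eq_right_inv ?_
    rw [Matrix.diagonal_mul_diagonal]
    convert Matrix.diagonal_one using 2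
    exact funext fun i => mul_inv_cancel₀ (hdne i)
  have key : ((Matrix.diagonal d + Matrix.replicateCol Unit u * Matrix.replicateRow Unit (fun _ => (1:ℂ))).det) =
      (Matrix.diagonal d).det * (1 + ∑ i : Idx N, (d i)⁻¹ * u i) := by
    rw [Matrix.det_add_replicateCol_mul_replicateRow (isUnit_iff_ne_zero.mpr hdetne) u (fun _ => (1:ℂ)), hinv]
    congr 1
    rw [Matrix.det_unique]
    simp [Matrix.mul_apply, Matrix.replicateRow_apply, Matrix.replicateCol_apply, Matrix.diagonal_apply,
      Finset.sum_comm (γ := Idx N)]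
  have hsum : (1 : ℂ) + ∑ i : Idx N, (d i)⁻¹ * u i =
      -s * ∑ j : Idx N, (ξ j : ℂ) / (((j.1 : ℤ) : ℂ) - s) := by
    have hterm : ∀ i : Idx N, (d i)⁻¹ * u i =
        -(ξ i : ℂ) + (-s) * ((ξ i : ℂ) / (((i.1 : ℤ) : ℂ) - s)) := by
      intro i
      have := hdne i
      simp only [hd] at this ⊢
      field_simp
      ring
    have h1 : ∑ x : Idx N, -(ξ x : ℂ) = -1 := by
      rw [Finset.sum_neg_distrib, ← Complex.ofReal_sum, hnorm, Complex.ofReal_one]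
    have h2 : ∑ x : Idx N, -s * ((ξ x : ℂ) / (((x.1 : ℤ) : ℂ) - s)) =
        -s * ∑ j : Idx N, (ξ j : ℂ) / (((j.1 : ℤ) : ℂ) - s) := (Finset.mul_sum _ _ _).symm
    rw [Finset.sum_congr rfl fun i _ => hterm i, Finset.sum_add_distrib, h1, h2]
    ring
  have main : (((((Matrix.diagonal fun i : Idx N => ((i.1 : ℤ) : ℝ)) -
        Matrix.vecMulVec ((Matrix.diagonal fun i : Idx N => ((i.1 : ℤ) : ℝ)).mulVec ξ)
          fun _ => 1).map fun x : ℝ => (x : ℂ)) - s • (1 : Matrix (Idx N) (Idx N) ℂ)).det) =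
      -s * (∏ i : Idx N, (((i.1 : ℤ) : ℂ) - s)) * ∑ j : Idx N, (ξ j : ℂ) / (((j.1 : ℤ) : ℂ) - s) := by
    rw [hM, key, hsum, hdet]; ring
  refine ⟨main, ?_⟩
  rw [main]
  have hprodne : (∏ i : Idx N, (((i.1 : ℤ) : ℂ) - s)) ≠ 0 :=
    Finset.prod_ne_zero_iff.mpr fun i _ => hdne i
  have hsumflip : ∑ j : Idx N, (ξ j : ℂ) / (s - ((j.1 : ℤ) : ℂ)) =
      -∑ j : Idx N, (ξ j : ℂ) / (((j.1 : ℤ) : ℂ) - s) := by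
    rw [← Finset.sum_neg_distrib]
    refine Finset.sum_congr rfl fun j _ => ?_
    rw [← div_neg, neg_sub]
  rw [hsumflip]
  constructor
  · intro h
    rcases mul_eq_zero.mp h with h' | h'
    · rcases mul_eq_zero.mp h' with h'' | h''
      · exact absurd h'' (neg_ne_zero.mpr hs0)
      · exact absurd h'' hprodne
    · rw [h', neg_zero]
  · intro h
    rw [neg_eq_zero.mp h, mul_zero]
end

section
/- Let N ∈ ℕ and let Q = (q_{i,j}), i, j ∈ {−N, …, N}, be the real matrix with q_{i,i} = a_i and q_{i,j} = (b_i − b_j)/(i − j) for i ≠ j, where a_{−i} = a_i and b_{−i} = −b_i. Let γ(e_j) = e_{−j}, D(e_j) = j·e_j, η = Σ_j e_j. Assume Q is positive semidefinite, Qξ = 0, γξ = ξ, ⟨ξ, η⟩ = 1, and set D' := D − |Dξ⟩⟨η|. Then det(D') = 0, and for every j ∈ {−N, …, N} with j ≠ 0 one has det(D' − j·Id) = 0 if and only if ξ_j = 0. -/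
/-- With `Q` of the standard form, `Q` PSD, `Qξ = 0`, `γξ = ξ`,
`⟨ξ, η⟩ = 1`, and `D' = D - |Dξ⟩⟨η|`, one has `det D' = 0`, and for every
`j ∈ {-N, …, N}` with `j ≠ 0`: `det(D' - j·Id) = 0` iff `ξ_j = 0`. -/
theorem stmt13 (N : ℕ) (a b : Idx N → ℝ)
    (ha : ∀ i, a (negIdx i) = a i) (hb : ∀ i, b (negIdx i) = -b i)
    (Q : Matrix (Idx N) (Idx N) ℝ)
    (hQdiag : ∀ i, Q i i = a i)
    (hQoff : ∀ i j, i ≠ j → Q i j = (b i - b j) / ((i.1 - j.1 : ℤ) : ℝ))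
    (hpsd : Q.PosSemidef)
    (D : Matrix (Idx N) (Idx N) ℝ)
    (hD : D = Matrix.diagonal fun i => ((i.1 : ℤ) : ℝ))
    (ξ : Idx N → ℝ) (hker : Q.mulVec ξ = 0)
    (heven : ∀ i, ξ (negIdx i) = ξ i)
    (hnorm : ∑ i : Idx N, ξ i = 1)
    (D' : Matrix (Idx N) (Idx N) ℝ)
    (hD' : D' = D - Matrix.vecMulVec (D.mulVec ξ) fun _ => 1) :
    Matrix.det D' = 0 ∧
      ∀ j : Idx N, j.1 ≠ 0 →
        (Matrix.det (D' - (((j.1 : ℤ) : ℝ)) • (1 : Matrix (Idx N) (Idx N) ℝ)) = 0 ↔ ξ j = 0) := by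
  subst hD hD'
  set d : Idx N → ℝ := fun i => ((i.1 : ℤ) : ℝ) with hd
  set M : Matrix (Idx N) (Idx N) ℝ :=
    Matrix.diagonal d - Matrix.vecMulVec ((Matrix.diagonal d).mulVec ξ) (fun _ => 1) with hM
  have key : ∀ (v : Idx N → ℝ) (i : Idx N),
      M.mulVec v i = d i * v i - (∑ k, v k) * (d i * ξ i) := by
    have h2 : ∀ (u x : Idx N → ℝ) (i : Idx N),
        (Matrix.vecMulVec u fun _ => (1:ℝ)).mulVec x i = u i * ∑ k, x k := by
      intro u x i
      simp [Matrix.vecMulVec, Matrix.mulVec, dotProduct, Finset.mul_sum]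
    intro v i
    rw [hM, Matrix.sub_mulVec]
    simp only [Pi.sub_apply, h2, Matrix.mulVec_diagonal]
    ring
  have hsub : ∀ (c : ℝ) (v : Idx N → ℝ) (i : Idx N),
      (M - c • (1 : Matrix (Idx N) (Idx N) ℝ)).mulVec v i
        = d i * v i - (∑ k, v k) * (d i * ξ i) - c * v i := by
    intro c v i
    rw [Matrix.sub_mulVec, ← key]
    simp [Matrix.smul_mulVec, Matrix.one_mulVec]
  have hξne : ξ ≠ 0 := by
    intro h; rw [h] at hnorm; simp at hnorm
  constructor
  · rw [← Matrix.exists_mulVec_eq_zero_iff]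
    refine ⟨ξ, hξne, funext fun i => ?_⟩
    rw [key, hnorm]
    ring_nf
    simp
  · intro j hj
    have hdj : d j ≠ 0 := by
      simp only [hd, ne_eq, Int.cast_eq_zero]; exact hj
    have hdne : ∀ i : Idx N, i ≠ j → d i - d j ≠ 0 := by
      intro i hij
      have : i.1 ≠ j.1 := fun h => hij (Subtype.ext h)
      simp only [hd, ne_eq, sub_eq_zero, Int.cast_injective.eq_iff]
      exact this
    constructor
    · -- det = 0 → ξ j = 0
      intro hdet
      obtain ⟨v, hv, hveq⟩ := Matrix.exists_mulVec_eq_zero_iff.mpr hdet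
      set s := ∑ k, v k with hs
      have heq : ∀ i, (d i - d j) * v i = s * (d i * ξ i) := by
        intro i
        have := congrFun hveq i
        rw [hsub] at this
        simp only [Pi.zero_apply] at this
        nlinarith [this]
      by_cases hs0 : s = 0
      · exfalso
        have hvz : ∀ i, i ≠ j → v i = 0 := by
          intro i hij
          have h := heq i
          rw [hs0, zero_mul] at h
          exact (mul_eq_zero.mp h).resolve_left (hdne i hij)
        have hsj : s = v j := by
          rw [hs, Finset.sum_eq_single j (fun i _ hi => hvz i hi) (by simp)]
        apply hv
        funext i
        by_cases hij : i = j
        · rw [hij, ← hsj, hs0]; rfl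
        · exact hvz i hij
      · have h := heq j
        rw [sub_self, zero_mul] at h
        have := (mul_eq_zero.mp h.symm).resolve_left hs0
        exact (mul_eq_zero.mp this).resolve_left hdj
    · -- ξ j = 0 → det = 0
      intro hξj
      rw [← Matrix.exists_mulVec_eq_zero_iff]
      set w : Idx N → ℝ := fun i => if i = j then 0 else d i * ξ i / (d i - d j) with hw
      set v := Function.update w j (1 - ∑ k, w k) with hv
      have hsum : ∑ k, v k = 1 := by
        rw [hv, Finset.sum_update_of_mem (Finset.mem_univ j),
          Finset.sum_sdiff_eq_sub (Finset.subset_univ {j})]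
        simp [hw]
      refine ⟨v, fun h => by rw [h] at hsum; simp at hsum, funext fun i => ?_⟩
      rw [hsub, hsum, one_mul]
      by_cases hij : i = j
      · subst hij
        simp [hξj, hd]
      · have hvi : v i = d i * ξ i / (d i - d j) := by
          rw [hv, Function.update_of_ne hij, hw]; simp [hij]
        rw [hvi]
        have := hdne i hij
        field_simp
        simp only [hd, Pi.zero_apply]
        ring
end

section
/- Let N ∈ ℕ and let Q = (q_{i,j}), i, j ∈ {−N, …, N}, be a real symmetric positive semidefinite matrix of the form q_{i,i} = a_i, q_{i,j} = (b_i − b_j)/(i − j) for i ≠ j, with a_{−i} = a_i and b_{−i} = −b_i. Assume the kernel of Q is one-dimensional and invariant under the map γ sending the j-th coordinate to the (−j)-th coordinate, with γξ = ξ for ξ ∈ ker Q. Then for any nonzero ξ ∈ ker Q, all complex roots of the polynomial P(s) = Σ_{k=−N}^{N} ξ_k · ∏_{j≠k, −N≤j≤N} (j − s) are real. -/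
open scoped Matrix


/-- Let `Q` be a real symmetric positive semidefinite matrix of the standard
form (`q_{i,i} = a_i`, `q_{i,j} = (b_i - b_j)/(i - j)`, `a` even, `b` odd), with
one-dimensional kernel all whose elements are even. Then for any nonzero `ξ ∈ ker Q`, all
complex roots of `P(s) = ∑_k ξ_k ∏_{j ≠ k} (j - s)` are real. -/
theorem stmt14 (N : ℕ) (a b : Idx N → ℝ)
    (ha : ∀ i, a (negIdx i) = a i) (hb : ∀ i, b (negIdx i) = -b i)
    (Q : Matrix (Idx N) (Idx N) ℝ)
    (hQdiag : ∀ i, Q i i = a i)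
    (hQoff : ∀ i j, i ≠ j → Q i j = (b i - b j) / ((i.1 - j.1 : ℤ) : ℝ))
    (hpsd : Q.PosSemidef)
    (hker1 : Module.finrank ℝ (LinearMap.ker Q.mulVecLin) = 1)
    (hkereven : ∀ v : Idx N → ℝ, Q.mulVec v = 0 → ∀ i, v (negIdx i) = v i)
    (ξ : Idx N → ℝ) (hξ : ξ ≠ 0) (hkerξ : Q.mulVec ξ = 0) :
    ∀ s : ℂ,
      (∑ k : Idx N, (ξ k : ℂ) *
          ∏ j ∈ Finset.univ.erase k, (((j.1 : ℤ) : ℂ) - s)) = 0 → s.im = 0 := by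
  intro s hP
  by_contra hs
  classical
  set c : Idx N → ℂ := fun k => ((k.1 : ℤ) : ℂ) - s with hc
  clear_value c
  have hcne : ∀ k, c k ≠ 0 := by
    intro k h
    apply hs
    have h2 := congrArg Complex.im h
    simp [hc] at h2
    exact h2
  set u : Idx N → ℂ := fun k => (ξ k : ℂ) / c k with hu
  clear_value u
  have hprod_ne : (∏ j, c j) ≠ 0 := Finset.prod_ne_zero_iff.mpr fun j _ => hcne j
  -- 1. ∑ u = 0
  have key : ∀ k : Idx N, (ξ k : ℂ) * ∏ j ∈ Finset.univ.erase k, c j = (∏ j, c j) * u k := by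
    intro k
    have hpe : (∏ j ∈ Finset.univ.erase k, c j) = (∏ j, c j) / c k := by
      rw [eq_div_iff (hcne k)]
      exact Finset.prod_erase_mul _ _ (Finset.mem_univ k)
    rw [hpe, hu]
    ring
  have hsum : ∑ k, u k = 0 := by
    have h0 : (∏ j, c j) * ∑ k, u k = 0 := by
      rw [Finset.mul_sum, ← hP]
      exact Finset.sum_congr rfl fun k _ => (key k).symm
    exact (mul_eq_zero.mp h0).resolve_left hprod_ne
  -- 2. T = 0
  have hT : ∑ k, ξ k / Complex.normSq (c k) = 0 := by
    have h1 := congrArg Complex.im hsum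
    rw [Complex.im_sum] at h1
    have h2 : ∀ k, (u k).im = s.im * (ξ k / Complex.normSq (c k)) := by
      intro k
      rw [hu]
      rw [Complex.div_im]
      simp [hc]
      ring
    rw [Finset.sum_congr rfl fun k _ => h2 k, ← Finset.mul_sum] at h1
    simpa [hs] using h1
  -- 3. scalar kernel relations
  have hker : ∀ i, ∑ j, Q i j * ξ j = 0 := by
    intro i
    have h := congrFun hkerξ i
    simpa [Matrix.mulVec, dotProduct] using h
  set ψ : ℂ := ∑ j, (b j : ℂ) * u j with hψ
  clear_value ψ
  -- 4. entrywise identity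
  have hA : ∀ i j, c i * ((Q i j : ℂ) * u j)
      = ((b i : ℂ) - (b j : ℂ)) * u j + (Q i j : ℂ) * (ξ j : ℂ) := by
    intro i j
    by_cases hij : i = j
    · subst hij
      simp only [hu, sub_self, zero_mul, zero_add]
      rw [mul_comm ((Q i i : ℝ) : ℂ) (((ξ i : ℝ) : ℂ) / c i), mul_comm ((Q i i : ℝ) : ℂ) ((ξ i : ℝ) : ℂ)]
      rw [← mul_assoc, mul_div_assoc', mul_comm (c i) _, mul_div_assoc, div_self (hcne i), mul_one]
    · have hijZ : i.1 - j.1 ≠ 0 := sub_ne_zero.mpr fun h => hij (Subtype.ext h)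
      have hijC : ((i.1 - j.1 : ℤ) : ℂ) ≠ 0 := Int.cast_ne_zero.mpr hijZ
      have hcc : c i - c j = ((i.1 - j.1 : ℤ) : ℂ) := by
        simp only [hc]
        push_cast
        ring
      have hQC : ((Q i j : ℝ) : ℂ) = (((b i : ℝ) : ℂ) - ((b j : ℝ) : ℂ)) / ((i.1 - j.1 : ℤ) : ℂ) := by
        rw [hQoff i j hij]
        push_cast
        ring
      rw [hQC, hu]
      simp only
      have hcj := hcne j
      have hijC' : ((i.1 : ℤ) : ℂ) - ((j.1 : ℤ) : ℂ) ≠ 0 := by push_cast at hijC; exact hijC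
      have hcc' : c i - c j = ((i.1 : ℤ) : ℂ) - ((j.1 : ℤ) : ℂ) := by push_cast at hcc; exact hcc
      push_cast
      field_simp
      rw [show c i = c j + (((i.1 : ℤ) : ℂ) - ((j.1 : ℤ) : ℂ)) from by linear_combination hcc']
      ring
  -- 5. c i * (Q u)_i = -ψ
  set v : Idx N → ℂ := fun i => ∑ j, (Q i j : ℂ) * u j with hv
  clear_value v
  have hvψ : ∀ i, c i * v i = -ψ := by
    intro i
    rw [hv, Finset.mul_sum, Finset.sum_congr rfl fun j _ => hA i j, Finset.sum_add_distrib]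
    have h1 : ∑ j, ((b i : ℂ) - (b j : ℂ)) * u j = (b i : ℂ) * (∑ j, u j) - ψ := by
      rw [hψ, Finset.mul_sum, ← Finset.sum_sub_distrib]
      exact Finset.sum_congr rfl fun j _ => by ring
    have h2 : ∑ j, (Q i j : ℂ) * (ξ j : ℂ) = 0 := by
      have h3 := hker i
      have : ((∑ j, Q i j * ξ j : ℝ) : ℂ) = 0 := by rw [h3]; simp
      rw [← this]
      push_cast
      rfl
    rw [h1, h2, hsum]
    ring
  -- 6. Hermitian form vanishes
  have hH : ∑ i, (starRingEnd ℂ) (u i) * v i = 0 := by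
    have h1 : ∀ i, (starRingEnd ℂ) (u i) * v i
        = -ψ * ((ξ i / Complex.normSq (c i) : ℝ) : ℂ) := by
      intro i
      have hvi : v i = -ψ / c i := by
        rw [eq_div_iff (hcne i), ← hvψ i]; ring
      rw [hvi, hu]
      simp only [map_div₀, Complex.conj_ofReal]
      rw [div_mul_div_comm, mul_comm ((starRingEnd ℂ) (c i)) (c i), Complex.mul_conj]
      push_cast
      ring
    rw [Finset.sum_congr rfl fun i _ => h1 i, ← Finset.mul_sum]
    have h2 : ∑ i, ((ξ i / Complex.normSq (c i) : ℝ) : ℂ) = 0 := by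
      rw [← Complex.ofReal_sum, hT, Complex.ofReal_zero]
    rw [h2, mul_zero]
  -- 7. real and imaginary parts are in the kernel
  set p : Idx N → ℝ := fun i => (u i).re with hp
  clear_value p
  set q : Idx N → ℝ := fun i => (u i).im with hq
  clear_value q
  have hvre : ∀ i, (v i).re = (Q *ᵥ p) i := by
    intro i
    rw [hv]
    rw [Complex.re_sum]
    simp [Matrix.mulVec, dotProduct, Complex.re_ofReal_mul, hp]
  have hvim : ∀ i, (v i).im = (Q *ᵥ q) i := by
    intro i
    rw [hv]
    rw [Complex.im_sum]
    simp [Matrix.mulVec, dotProduct, Complex.im_ofReal_mul, hq]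
  have hre0 : p ⬝ᵥ (Q *ᵥ p) + q ⬝ᵥ (Q *ᵥ q) = 0 := by
    have h1 := congrArg Complex.re hH
    rw [Complex.re_sum] at h1
    simp only [Complex.mul_re, Complex.conj_re, Complex.conj_im] at h1
    have h2 : ∀ i, (u i).re * (v i).re - -(u i).im * (v i).im
        = p i * (Q *ᵥ p) i + q i * (Q *ᵥ q) i := by
      intro i
      rw [hvre i, hvim i, hp, hq]
      ring
    rw [Finset.sum_congr rfl fun i _ => h2 i, Finset.sum_add_distrib] at h1
    simpa [dotProduct] using h1
  have hpp : 0 ≤ p ⬝ᵥ (Q *ᵥ p) := by simpa using hpsd.dotProduct_mulVec_nonneg p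
  have hqq : 0 ≤ q ⬝ᵥ (Q *ᵥ q) := by simpa using hpsd.dotProduct_mulVec_nonneg q
  have hQp : Q *ᵥ p = 0 := by
    refine (hpsd.dotProduct_mulVec_zero_iff p).mp ?_
    simp only [star_trivial]
    linarith
  have hQq : Q *ᵥ q = 0 := by
    refine (hpsd.dotProduct_mulVec_zero_iff q).mp ?_
    simp only [star_trivial]
    linarith
  -- 8. kernel is spanned by ξ
  have hK : LinearMap.ker Q.mulVecLin = Submodule.span ℝ {ξ} := by
    have hle : Submodule.span ℝ {ξ} ≤ LinearMap.ker Q.mulVecLin := by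
      rw [Submodule.span_singleton_le_iff_mem]
      exact LinearMap.mem_ker.mpr (by simpa [Matrix.mulVecLin_apply] using hkerξ)
    refine (Submodule.eq_of_le_of_finrank_le hle ?_).symm
    rw [hker1, finrank_span_singleton hξ]
  obtain ⟨α, hα⟩ : ∃ α : ℝ, α • ξ = p := by
    have hmem : p ∈ LinearMap.ker Q.mulVecLin :=
      LinearMap.mem_ker.mpr (by simpa [Matrix.mulVecLin_apply] using hQp)
    rw [hK, Submodule.mem_span_singleton] at hmem
    exact hmem
  obtain ⟨β, hβ⟩ : ∃ β : ℝ, β • ξ = q := by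
    have hmem : q ∈ LinearMap.ker Q.mulVecLin :=
      LinearMap.mem_ker.mpr (by simpa [Matrix.mulVecLin_apply] using hQq)
    rw [hK, Submodule.mem_span_singleton] at hmem
    exact hmem
  -- 9. final contradiction
  have huLam : ∀ k, u k = (ξ k : ℂ) * ((α : ℂ) + (β : ℂ) * Complex.I) := by
    intro k
    have h1 : u k = ((p k : ℝ) : ℂ) + ((q k : ℝ) : ℂ) * Complex.I := by
      rw [hp, hq]; exact (Complex.re_add_im (u k)).symm
    have h2 : p k = α * ξ k := by rw [← hα]; simp [mul_comm]
    have h3 : q k = β * ξ k := by rw [← hβ]; simp [mul_comm]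
    rw [h1, h2, h3]
    push_cast
    ring
  obtain ⟨k, hk⟩ : ∃ k, ξ k ≠ 0 := Function.ne_iff.mp hξ
  by_cases hm : ∃ m, m ≠ k ∧ ξ m ≠ 0
  · obtain ⟨m, hmk, hm'⟩ := hm
    have e1 : (c k)⁻¹ = (α : ℂ) + (β : ℂ) * Complex.I := by
      have := huLam k
      simp only [hu] at this
      rw [div_eq_mul_inv] at this
      exact mul_left_cancel₀ (Complex.ofReal_ne_zero.mpr hk) this
    have e2 : (c m)⁻¹ = (α : ℂ) + (β : ℂ) * Complex.I := by
      have := huLam m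
      simp only [hu] at this
      rw [div_eq_mul_inv] at this
      exact mul_left_cancel₀ (Complex.ofReal_ne_zero.mpr hm') this
    have e3 : c k = c m := by
      have := e1.trans e2.symm
      exact inv_injective this
    have e4 : ((k.1 : ℤ) : ℂ) = ((m.1 : ℤ) : ℂ) := by
      rw [hc] at e3
      simpa [sub_left_inj] using e3
    have e5 : k.1 = m.1 := by exact_mod_cast e4
    exact hmk (Subtype.ext e5.symm)
  · push_neg at hm
    have h1 : ∑ i, u i = u k :=
      Finset.sum_eq_single k (fun m _ hmk => by simp [hu, hm m hmk]) (by simp)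
    rw [hsum] at h1
    rw [hu] at h1
    exact (div_ne_zero (Complex.ofReal_ne_zero.mpr hk) (hcne k)) h1.symm
end

section
/- Let N ∈ ℕ and let Q = (q_{i,j}), i, j ∈ {−N, …, N}, be a real symmetric positive semidefinite matrix of the form q_{i,i} = a_i, q_{i,j} = (b_i − b_j)/(i − j) for i ≠ j, with a_{−i} = a_i and b_{−i} = −b_i. Assume the kernel of Q is one-dimensional and even (every ξ ∈ ker Q satisfies ξ_{−j} = ξ_j). Let ξ ∈ ker Q be nonzero and define ξ(x) := Σ_{k=−N}^{N} ξ_k exp(2πikx) for x ∈ [0, 1] and ξ(x) = 0 for x ∉ [0, 1]. Then the Fourier transform ξ̂(z) = ∫_0^1 ξ(x) e^{−izx} dx is an entire function, and every z ∈ ℂ with ξ̂(z) = 0 is real. -/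
open Complex MeasureTheory Finset

noncomputable def phi (c : ℂ) : ℂ := if c = 0 then 1 else (Complex.exp c - 1) / c

private lemma stmt15_aux (N : ℕ) (b : Idx N → ℝ) (Q : Matrix (Idx N) (Idx N) ℝ)
    (hQoff : ∀ i j, i ≠ j → Q i j = (b i - b j) / ((i.1 - j.1 : ℤ) : ℝ))
    (hpsd : Q.PosSemidef)
    (hker1 : Module.finrank ℝ (LinearMap.ker Q.mulVecLin) = 1)
    (ξ : Idx N → ℝ) (hξ : ξ ≠ 0) (hkerξ : Q.mulVec ξ = 0)
    (x v : ℝ) (hv : v ≠ 0)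
    (t w : Idx N → ℝ)
    (ht : ∀ k, t k = x - 2*Real.pi*(k.1:ℝ))
    (hw : ∀ k, w k = ((t k)^2 + v^2)⁻¹)
    (hC : ∑ k, ξ k * w k = 0)
    (hD' : ∑ k, ξ k * t k * w k = 0) : False := by
  have hπ : (0:ℝ) < Real.pi := Real.pi_pos
  have hwpos : ∀ k, 0 < w k := fun k => by rw [hw]; positivity
  have hw1 : ∀ k, w k * ((t k)^2 + v^2) = 1 := fun k => by
    rw [hw]; field_simp
  have hkrow : ∀ j, ∑ k, Q j k * ξ k = 0 := by
    intro j
    have := congrFun hkerξ j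
    simpa [Matrix.mulVec, dotProduct] using this
  have hsymm : ∀ j k, Q k j = Q j k := fun j k => by
    have := hpsd.1.apply j k
    simpa using this
  have hkcol : ∀ k, ∑ j, Q j k * ξ j = 0 := by
    intro k
    rw [show (∑ j, Q j k * ξ j) = ∑ j, Q k j * ξ j from
      Finset.sum_congr rfl (fun j _ => by rw [hsymm])]
    exact hkrow k
  have hD : ∑ k, (k.1:ℝ) * (ξ k * w k) = 0 := by
    have h1 : ∑ k, ξ k * t k * w k
        = x * (∑ k, ξ k * w k) - 2*Real.pi * ∑ k, (k.1:ℝ) * (ξ k * w k) := by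
      rw [Finset.mul_sum, Finset.mul_sum, ← Finset.sum_sub_distrib]
      exact Finset.sum_congr rfl fun k _ => by rw [ht]; ring
    rw [hD', hC, mul_zero] at h1
    have h2 : 2*Real.pi * ∑ k, (k.1:ℝ) * (ξ k * w k) = 0 := by linarith
    exact (mul_eq_zero.mp h2).resolve_left (by positivity)
  have hqt : ∀ j k, Q j k * (t j - t k)^2
      = 4*Real.pi^2*(b j - b k)*((j.1:ℝ) - (k.1:ℝ)) := by
    intro j k
    rcases eq_or_ne j k with rfl | hjk
    · simp
    · have hne : (j.1:ℝ) ≠ (k.1:ℝ) := by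
        intro h
        exact hjk (Subtype.ext (by exact_mod_cast h))
      have hne' : (j.1:ℝ) - (k.1:ℝ) ≠ 0 := sub_ne_zero.mpr hne
      rw [hQoff j k hjk, ht, ht]
      push_cast
      field_simp
      ring
  have key : ∀ j k, Q j k * ((ξ j * t j * w j) * (ξ k * t k * w k)
        + v^2 * ((ξ j * w j) * (ξ k * w k))) =
      (ξ j * w j/2) * (Q j k * ξ k) + (Q j k * ξ j) * (ξ k * w k/2)
      - (2*Real.pi^2*(b j*(j.1:ℝ)*(ξ j*w j)))*(ξ k*w k)
      + (2*Real.pi^2*(b j*(ξ j*w j)))*((k.1:ℝ)*(ξ k*w k))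
      + (2*Real.pi^2*((j.1:ℝ)*(ξ j*w j)))*(b k*(ξ k*w k))
      - (ξ j*w j)*(2*Real.pi^2*(b k*(k.1:ℝ)*(ξ k * w k))) := by
    intro j k
    have h1 := hw1 j
    have h2 := hw1 k
    have h3 := hqt j k
    linear_combination (Q j k * ξ j * ξ k * w k / 2) * h1 + (Q j k * ξ j * ξ k * w j / 2) * h2
      - (ξ j * ξ k * w j * w k / 2) * h3
  have hSsum : ∑ j, ∑ k, Q j k * ((ξ j * t j * w j) * (ξ k * t k * w k)
      + v^2*((ξ j * w j) * (ξ k * w k))) = 0 := by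
    have e0 : ∑ j, ∑ k, Q j k * ((ξ j * t j * w j) * (ξ k * t k * w k)
        + v^2*((ξ j * w j) * (ξ k * w k)))
        = (∑ j, ∑ k, (ξ j * w j/2) * (Q j k * ξ k))
          + (∑ j, ∑ k, (Q j k * ξ j) * (ξ k * w k/2))
          - (∑ j, 2*Real.pi^2*(b j*(j.1:ℝ)*(ξ j*w j))) * (∑ k, ξ k*w k)
          + (∑ j, 2*Real.pi^2*(b j*(ξ j*w j))) * (∑ k, (k.1:ℝ)*(ξ k*w k))
          + (∑ j, 2*Real.pi^2*((j.1:ℝ)*(ξ j*w j))) * (∑ k, b k*(ξ k*w k))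
          - (∑ j, ξ j*w j) * (∑ k, 2*Real.pi^2*(b k*(k.1:ℝ)*(ξ k * w k))) := by
      rw [Finset.sum_mul_sum, Finset.sum_mul_sum, Finset.sum_mul_sum, Finset.sum_mul_sum,
        ← Finset.sum_add_distrib, ← Finset.sum_sub_distrib, ← Finset.sum_add_distrib,
        ← Finset.sum_add_distrib, ← Finset.sum_sub_distrib]
      refine Finset.sum_congr rfl fun j _ => ?_
      rw [← Finset.sum_add_distrib, ← Finset.sum_sub_distrib, ← Finset.sum_add_distrib,
        ← Finset.sum_add_distrib, ← Finset.sum_sub_distrib]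
      exact Finset.sum_congr rfl fun k _ => key j k
    have e1 : (∑ j : Idx N, ∑ k : Idx N, (ξ j * w j/2) * (Q j k * ξ k)) = 0 := by
      refine Finset.sum_eq_zero fun j _ => ?_
      rw [← Finset.mul_sum, hkrow j, mul_zero]
    have e2 : (∑ j : Idx N, ∑ k : Idx N, (Q j k * ξ j) * (ξ k * w k/2)) = 0 := by
      rw [Finset.sum_comm]
      refine Finset.sum_eq_zero fun k _ => ?_
      rw [← Finset.sum_mul, hkcol k, zero_mul]
    have e5 : (∑ j : Idx N, 2*Real.pi^2*((j.1:ℝ)*(ξ j*w j))) = 0 := by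
      rw [← Finset.mul_sum, hD, mul_zero]
    rw [e0, e1, e2, e5, hC, hD]
    ring
  have hdot : ∀ g : Idx N → ℝ, dotProduct g (Q.mulVec g)
      = ∑ j, ∑ k, Q j k * (g j * g k) := by
    intro g
    simp only [dotProduct, Matrix.mulVec, Finset.mul_sum]
    exact Finset.sum_congr rfl fun j _ => Finset.sum_congr rfl fun k _ => by ring
  have hcombine : dotProduct (fun k => ξ k * t k * w k)
        (Q.mulVec (fun k => ξ k * t k * w k))
      + v^2 * dotProduct (fun k => ξ k * w k) (Q.mulVec (fun k => ξ k * w k)) = 0 := by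
    rw [hdot, hdot, ← hSsum, Finset.mul_sum, ← Finset.sum_add_distrib]
    refine Finset.sum_congr rfl fun j _ => ?_
    rw [Finset.mul_sum, ← Finset.sum_add_distrib]
    exact Finset.sum_congr rfl fun k _ => by ring
  have hupos : 0 ≤ dotProduct (fun k => ξ k * t k * w k)
      (Q.mulVec (fun k => ξ k * t k * w k)) := by simpa using hpsd.dotProduct_mulVec_nonneg (fun k => ξ k * t k * w k)
  have hypos : 0 ≤ dotProduct (fun k => ξ k * w k)
      (Q.mulVec (fun k => ξ k * w k)) := by simpa using hpsd.dotProduct_mulVec_nonneg (fun k => ξ k * w k)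
  have hv2 : 0 < v^2 := by positivity
  have hu0 : dotProduct (fun k => ξ k * t k * w k)
      (Q.mulVec (fun k => ξ k * t k * w k)) = 0 := by nlinarith
  have hy0 : dotProduct (fun k => ξ k * w k)
      (Q.mulVec (fun k => ξ k * w k)) = 0 := by nlinarith
  have hQu : Q.mulVec (fun k => ξ k * t k * w k) = 0 :=
    (hpsd.dotProduct_mulVec_zero_iff _).mp (by simpa using hu0)
  have hQy : Q.mulVec (fun k => ξ k * w k) = 0 :=
    (hpsd.dotProduct_mulVec_zero_iff _).mp (by simpa using hy0)
  have hspan : ∀ g : Idx N → ℝ, Q.mulVec g = 0 → ∃ γ : ℝ, g = γ • ξ := by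
    have hξker : ξ ∈ LinearMap.ker Q.mulVecLin := by
      simp [LinearMap.mem_ker, Matrix.mulVecLin_apply, hkerξ]
    have hle : Submodule.span ℝ {ξ} ≤ LinearMap.ker Q.mulVecLin :=
      Submodule.span_le.mpr (by simpa using hξker)
    have heq : Submodule.span ℝ {ξ} = LinearMap.ker Q.mulVecLin := by
      apply Submodule.eq_of_le_of_finrank_le hle
      rw [hker1, finrank_span_singleton hξ]
    intro g hg
    have hg' : g ∈ Submodule.span ℝ {ξ} := by
      rw [heq]
      simp [LinearMap.mem_ker, Matrix.mulVecLin_apply, hg]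
    obtain ⟨γ, hγ⟩ := Submodule.mem_span_singleton.mp hg'
    exact ⟨γ, hγ.symm⟩
  obtain ⟨k₀, hk₀⟩ := Function.ne_iff.mp hξ
  have hk₀ : ξ k₀ ≠ 0 := by simpa using hk₀
  obtain ⟨lam, hlam⟩ := hspan _ hQy
  obtain ⟨mu, hmu⟩ := hspan _ hQu
  have hwk : ∀ k, ξ k ≠ 0 → w k = lam ∧ t k * w k = mu := by
    intro k hk
    have h1 : ξ k * w k = lam * ξ k := by
      have := congrFun hlam k
      simpa using this
    have h2 : ξ k * t k * w k = mu * ξ k := by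
      have := congrFun hmu k
      simpa using this
    constructor
    · refine mul_left_cancel₀ hk ?_
      rw [h1, mul_comm]
    · refine mul_left_cancel₀ hk ?_
      rw [← mul_assoc, h2, mul_comm]
  have huniq : ∀ k, ξ k ≠ 0 → k = k₀ := by
    intro k hk
    obtain ⟨e1, e2⟩ := hwk k hk
    obtain ⟨f1, f2⟩ := hwk k₀ hk₀
    have hlam0 : lam ≠ 0 := by rw [← f1]; exact ne_of_gt (hwpos k₀)
    rw [e1] at e2
    rw [f1] at f2
    have htt : t k = t k₀ := mul_right_cancel₀ hlam0 (e2.trans f2.symm)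
    rw [ht, ht] at htt
    have hcast : (k.1:ℝ) = (k₀.1:ℝ) := by
      have h2π : (2*Real.pi) ≠ 0 := by positivity
      have h3 : 2*Real.pi*(k.1:ℝ) = 2*Real.pi*(k₀.1:ℝ) := by linarith
      exact mul_left_cancel₀ h2π h3
    exact Subtype.ext (by exact_mod_cast hcast)
  have hsingle : ∑ k, ξ k * w k = ξ k₀ * w k₀ := by
    refine Finset.sum_eq_single k₀ (fun k _ hk => ?_) (fun h => absurd (Finset.mem_univ k₀) h)
    rcases eq_or_ne (ξ k) 0 with h | h
    · rw [h, zero_mul]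
    · exact absurd (huniq k h) hk
  rw [hC] at hsingle
  rcases mul_eq_zero.mp hsingle.symm with h | h
  · exact hk₀ h
  · exact absurd h (ne_of_gt (hwpos k₀))

lemma phi_diff : Differentiable ℂ phi := by
  intro c
  rcases eq_or_ne c 0 with rfl | hc
  · refine (Complex.analyticAt_of_differentiable_on_punctured_nhds_of_continuousAt ?_ ?_).differentiableAt
    · filter_upwards [self_mem_nhdsWithin] with z hz
      have hz : z ≠ 0 := hz
      have : DifferentiableAt ℂ (fun w => (Complex.exp w - 1) / w) z :=
        (((Complex.differentiable_exp z).sub (differentiableAt_const 1)).div differentiableAt_id hz)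
      refine this.congr_of_eventuallyEq ?_
      filter_upwards [isOpen_ne.mem_nhds hz] with w hw
      simp [phi, hw]
    · have h1 : Filter.Tendsto (fun z => (Complex.exp z - 1) / z) (nhdsWithin 0 {(0:ℂ)}ᶜ) (nhds 1) := by
        have := Complex.hasDerivAt_exp 0
        rw [hasDerivAt_iff_tendsto_slope] at this
        simp only [Complex.exp_zero] at this
        refine this.congr' ?_
        filter_upwards [self_mem_nhdsWithin] with z hz
        simp [slope, hz, div_eq_inv_mul]
      have : Filter.Tendsto phi (nhdsWithin 0 {(0:ℂ)}ᶜ) (nhds (phi 0)) := by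
        simp only [phi, if_pos rfl]
        refine h1.congr' ?_
        filter_upwards [self_mem_nhdsWithin] with z hz
        have hz' : z ≠ 0 := hz
        simp [phi, hz']
      rw [ContinuousAt, ← nhdsNE_sup_pure 0]
      exact this.sup (tendsto_pure_nhds phi 0)
  · have : DifferentiableAt ℂ (fun w => (Complex.exp w - 1) / w) c :=
      (((Complex.differentiable_exp c).sub (differentiableAt_const 1)).div differentiableAt_id hc)
    refine this.congr_of_eventuallyEq ?_
    filter_upwards [isOpen_ne.mem_nhds hc] with w hw
    simp [phi, hw]

lemma phi_integral (c : ℂ) : (∫ x in Set.Icc (0:ℝ) 1, Complex.exp (c * x)) = phi c := by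
  rw [MeasureTheory.integral_Icc_eq_integral_Ioc, ← intervalIntegral.integral_of_le zero_le_one]
  rcases eq_or_ne c 0 with rfl | hc
  · simp [phi]
  · rw [integral_exp_mul_complex hc]
    simp [phi, hc]

/-- Let `Q` be a real symmetric positive semidefinite matrix of the standard
form with one-dimensional, even kernel, and let `ξ ∈ ker Q` be nonzero. Set
`ξ(x) = ∑_k ξ_k exp(2πikx)` on `[0, 1]`, extended by zero. Then the Fourier transform
`ξ̂(z) = ∫_0^1 ξ(x) e^(-izx) dx` is entire and all its zeros are real. -/
theorem stmt15 (N : ℕ) (a b : Idx N → ℝ)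
    (ha : ∀ i, a (negIdx i) = a i) (hb : ∀ i, b (negIdx i) = -b i)
    (Q : Matrix (Idx N) (Idx N) ℝ)
    (hQdiag : ∀ i, Q i i = a i)
    (hQoff : ∀ i j, i ≠ j → Q i j = (b i - b j) / ((i.1 - j.1 : ℤ) : ℝ))
    (hpsd : Q.PosSemidef)
    (hker1 : Module.finrank ℝ (LinearMap.ker Q.mulVecLin) = 1)
    (hkereven : ∀ v : Idx N → ℝ, Q.mulVec v = 0 → ∀ i, v (negIdx i) = v i)
    (ξ : Idx N → ℝ) (hξ : ξ ≠ 0) (hkerξ : Q.mulVec ξ = 0)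
    (F : ℂ → ℂ)
    (hF : F = fun z => ∫ x in Set.Icc (0 : ℝ) 1,
        (∑ k : Idx N, (ξ k : ℂ) * Complex.exp (2 * Real.pi * Complex.I * (k.1 : ℤ) * x)) *
          Complex.exp (-Complex.I * z * x)) :
    Differentiable ℂ F ∧ ∀ z : ℂ, F z = 0 → z.im = 0 := by
  --

  have hrep : ∀ z : ℂ, F z = ∑ k : Idx N,
      (ξ k : ℂ) * phi (2 * Real.pi * Complex.I * ((k.1 : ℤ) : ℂ) - Complex.I * z) := by
    intro z
    simp only [hF]
    have hfun : (fun x : ℝ => (∑ k : Idx N, (ξ k : ℂ)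
          * Complex.exp (2 * Real.pi * Complex.I * ((k.1:ℤ):ℂ) * x)) * Complex.exp (-Complex.I * z * x))
        = fun x : ℝ => ∑ k : Idx N, (ξ k : ℂ)
          * Complex.exp ((2 * Real.pi * Complex.I * ((k.1:ℤ):ℂ) - Complex.I * z) * x) := by
      funext x
      rw [Finset.sum_mul]
      refine Finset.sum_congr rfl fun k _ => ?_
      rw [mul_assoc, ← Complex.exp_add]
      ring_nf
    rw [hfun]
    rw [MeasureTheory.integral_finset_sum _ (fun k _ => ?_)]
    · refine Finset.sum_congr rfl fun k _ => ?_
      rw [MeasureTheory.integral_const_mul, phi_integral]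
    · exact (continuous_const.mul (Complex.continuous_exp.comp
        (continuous_const.mul Complex.continuous_ofReal))).integrableOn_Icc
  constructor
  · have hFe : F = fun z => ∑ k : Idx N,
        (ξ k : ℂ) * phi (2 * Real.pi * Complex.I * ((k.1 : ℤ) : ℂ) - Complex.I * z) :=
      funext hrep
    rw [hFe]
    apply Differentiable.fun_sum
    intro k _
    exact (differentiable_const _).mul (phi_diff.comp
      ((differentiable_const _).sub ((differentiable_id.const_mul Complex.I))))
  · intro z hz0
    by_contra hzim
    set E : ℂ := Complex.exp (-Complex.I * z) with hE
    have hck : ∀ k : Idx N, (2 * Real.pi * Complex.I * ((k.1:ℤ):ℂ) - Complex.I * z) ≠ 0 := by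
      intro k h
      apply hzim
      have h2 : Complex.I * (2 * Real.pi * ((k.1:ℤ):ℂ) - z) = 0 := by linear_combination h
      have h3 : (2 * Real.pi * ((k.1:ℤ):ℂ) - z) = 0 :=
        (mul_eq_zero.mp h2).resolve_left Complex.I_ne_zero
      have h4 : z = 2 * Real.pi * ((k.1:ℤ):ℂ) := by linear_combination -h3
      rw [h4]
      simp
    have hexp : ∀ k : Idx N,
        Complex.exp (2 * Real.pi * Complex.I * ((k.1:ℤ):ℂ) - Complex.I * z) = E := by
      intro k
      rw [show (2 * Real.pi * Complex.I * ((k.1:ℤ):ℂ) - Complex.I * z)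
          = ((k.1:ℤ):ℂ) * (2 * Real.pi * Complex.I) + (-Complex.I * z) by ring,
        Complex.exp_add, Complex.exp_int_mul_two_pi_mul_I, one_mul]
    have hd : ∀ k : Idx N, (z - 2 * Real.pi * ((k.1:ℤ):ℂ)) ≠ 0 := by
      intro k h
      apply hzim
      have := congrArg Complex.im h
      simpa using this
    have hE1 : E - 1 ≠ 0 := by
      intro h
      apply hzim
      have hE' : E = 1 := by linear_combination h
      have := congrArg (norm : ℂ → ℝ) hE'
      rw [hE, Complex.norm_exp] at this
      simp only [norm_one] at this
      have hre : (-Complex.I * z).re = z.im := by simp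
      rw [hre] at this
      exact Real.exp_injective (by rw [this, Real.exp_zero])
    have hsum0 : ∑ k : Idx N, (ξ k : ℂ)
        * phi (2 * Real.pi * Complex.I * ((k.1 : ℤ) : ℂ) - Complex.I * z) = 0 := by
      rw [← hrep z]; exact hz0
    have hfac : (E - 1) * Complex.I * (∑ k : Idx N, (ξ k:ℂ) * (z - 2 * Real.pi * ((k.1:ℤ):ℂ))⁻¹) = 0 := by
      rw [Finset.mul_sum, ← hsum0]
      refine Finset.sum_congr rfl fun k _ => ?_
      rw [phi, if_neg (hck k), hexp k]
      rw [show (2 * Real.pi * Complex.I * ((k.1:ℤ):ℂ) - Complex.I * z)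
          = -Complex.I * (z - 2 * Real.pi * ((k.1:ℤ):ℂ)) by ring]
      rw [div_eq_mul_inv, mul_inv, inv_neg, Complex.inv_I, neg_neg]
      ring
    have hsumd : ∑ k : Idx N, (ξ k:ℂ) * (z - 2 * Real.pi * ((k.1:ℤ):ℂ))⁻¹ = 0 := by
      rcases mul_eq_zero.mp hfac with h | h
      · exact absurd h (mul_ne_zero hE1 Complex.I_ne_zero)
      · exact h
    -- pass to real and imaginary parts
    have hdre : ∀ k : Idx N, (z - 2 * Real.pi * ((k.1:ℤ):ℂ)).re = z.re - 2*Real.pi*(k.1:ℝ) := by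
      intro k; simp
    have hdim : ∀ k : Idx N, (z - 2 * Real.pi * ((k.1:ℤ):ℂ)).im = z.im := by
      intro k; simp
    have hns : ∀ k : Idx N, Complex.normSq (z - 2 * Real.pi * ((k.1:ℤ):ℂ))
        = (z.re - 2*Real.pi*(k.1:ℝ))^2 + z.im^2 := by
      intro k
      rw [Complex.normSq_apply, hdre, hdim]
      ring
    have hNS : ∀ k : Idx N, ((z.re - 2*Real.pi*(k.1:ℝ))^2 + z.im^2) ≠ 0 := by
      intro k
      positivity
    have him_term : ∀ k : Idx N, ((ξ k:ℂ) * (z - 2 * Real.pi * ((k.1:ℤ):ℂ))⁻¹).im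
        = (-z.im) * (ξ k * (((z.re - 2*Real.pi*(k.1:ℝ))^2 + z.im^2)⁻¹)) := by
      intro k
      rw [← div_eq_mul_inv, Complex.div_im, hdre k, hdim k, hns k, Complex.ofReal_re,
        Complex.ofReal_im]
      rw [div_eq_mul_inv, div_eq_mul_inv]
      ring
    have hre_term : ∀ k : Idx N, ((ξ k:ℂ) * (z - 2 * Real.pi * ((k.1:ℤ):ℂ))⁻¹).re
        = ξ k * (z.re - 2*Real.pi*(k.1:ℝ)) * (((z.re - 2*Real.pi*(k.1:ℝ))^2 + z.im^2)⁻¹) := by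
      intro k
      rw [← div_eq_mul_inv, Complex.div_re, hdre k, hdim k, hns k, Complex.ofReal_re,
        Complex.ofReal_im]
      rw [div_eq_mul_inv, div_eq_mul_inv]
      ring
    have hCsum : ∑ k : Idx N, ξ k * (((z.re - 2*Real.pi*(k.1:ℝ))^2 + z.im^2)⁻¹) = 0 := by
      have him := congrArg Complex.im hsumd
      rw [Complex.im_sum] at him
      simp only [him_term, Complex.zero_im] at him
      rw [← Finset.mul_sum] at him
      rcases mul_eq_zero.mp him with h | h
      · exact absurd (neg_eq_zero.mp h) hzim
      · exact h
    have hDsum : ∑ k : Idx N, ξ k * (z.re - 2*Real.pi*(k.1:ℝ))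
        * (((z.re - 2*Real.pi*(k.1:ℝ))^2 + z.im^2)⁻¹) = 0 := by
      have hre := congrArg Complex.re hsumd
      rw [Complex.re_sum] at hre
      simpa only [hre_term, Complex.zero_re] using hre
    exact stmt15_aux N b Q hQoff hpsd hker1 ξ hξ hkerξ z.re z.im hzim
      (fun k => z.re - 2*Real.pi*(k.1:ℝ)) (fun k => ((z.re - 2*Real.pi*(k.1:ℝ))^2 + z.im^2)⁻¹)
      (fun k => rfl) (fun k => rfl) hCsum hDsum
end

section
/- Let N ∈ ℕ and let λ_{−N}, …, λ_N be distinct real numbers with λ_{−j} = −λ_j for all j. Let Q = (q_{i,j}), i, j ∈ {−N, …, N}, be a real symmetric positive semidefinite matrix of the form q_{i,i} = a_i, q_{i,j} = (b_i − b_j)/(λ_i − λ_j) for i ≠ j, with b_{−i} = −b_i, and assume the kernel of Q is one-dimensional and even (every ξ ∈ ker Q satisfies ξ_{−j} = ξ_j). Then for any nonzero ξ ∈ ker Q, all complex roots of the polynomial P(s) = Σ_{k=−N}^{N} ξ_k · ∏_{j≠k, −N≤j≤N} (λ_j − s) are real. -/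
/-- Let `λ_{-N}, …, λ_N` be distinct real numbers with `λ_{-j} = -λ_j`, and
`Q` a real symmetric positive semidefinite matrix with `q_{i,i} = a_i`,
`q_{i,j} = (b_i - b_j)/(λ_i - λ_j)` for `i ≠ j` (`b` odd), with one-dimensional, even kernel.
Then for any nonzero `ξ ∈ ker Q`, all complex roots of
`P(s) = ∑_k ξ_k ∏_{j ≠ k} (λ_j - s)` are real. -/
theorem stmt16 (N : ℕ) (lam : Idx N → ℝ)
    (hlaminj : Function.Injective lam)
    (hlamodd : ∀ j, lam (negIdx j) = -lam j)
    (a b : Idx N → ℝ) (hb : ∀ i, b (negIdx i) = -b i)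
    (Q : Matrix (Idx N) (Idx N) ℝ)
    (hQdiag : ∀ i, Q i i = a i)
    (hQoff : ∀ i j, i ≠ j → Q i j = (b i - b j) / (lam i - lam j))
    (hpsd : Q.PosSemidef)
    (hker1 : Module.finrank ℝ (LinearMap.ker Q.mulVecLin) = 1)
    (hkereven : ∀ v : Idx N → ℝ, Q.mulVec v = 0 → ∀ i, v (negIdx i) = v i)
    (ξ : Idx N → ℝ) (hξ : ξ ≠ 0) (hkerξ : Q.mulVec ξ = 0) :
    ∀ s : ℂ,
      (∑ k : Idx N, (ξ k : ℂ) *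
          ∏ j ∈ Finset.univ.erase k, ((lam j : ℂ) - s)) = 0 → s.im = 0 := by
  intro s hP
  by_contra him
  -- denominators are nonzero
  have hden : ∀ j : Idx N, ((lam j : ℂ) - s) ≠ 0 := by
    intro j h
    rw [sub_eq_zero] at h
    exact him (by rw [← h]; simp)
  set u : Idx N → ℂ := fun j => (ξ j : ℂ) * ((lam j : ℂ) - s)⁻¹ with hu
  -- Step A : F := ∑ u = 0
  have hF : (∑ j : Idx N, u j) = 0 := by
    have hprodne : (∏ j : Idx N, ((lam j : ℂ) - s)) ≠ 0 :=
      Finset.prod_ne_zero_iff.mpr fun j _ => hden j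
    have key : ∀ k : Idx N, (ξ k : ℂ) * ∏ j ∈ Finset.univ.erase k, ((lam j : ℂ) - s)
        = u k * ∏ j : Idx N, ((lam j : ℂ) - s) := by
      intro k
      rw [← Finset.mul_prod_erase Finset.univ _ (Finset.mem_univ k), hu]
      linear_combination (-(ξ k : ℂ) * ∏ j ∈ Finset.univ.erase k, ((lam j : ℂ) - s)) *
        inv_mul_cancel₀ (hden k)
    rw [Finset.sum_congr rfl (fun k _ => key k), ← Finset.sum_mul,
      mul_eq_zero] at hP
    exact hP.resolve_right hprodne
  -- Step B : T = 0
  have hT : (∑ j : Idx N, ξ j * (Complex.normSq ((lam j : ℂ) - s))⁻¹) = 0 := by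
    have h1 : (∑ j : Idx N, u j).im = 0 := by rw [hF]; rfl
    rw [Complex.im_sum] at h1
    have h2 : ∀ j : Idx N, (u j).im = ξ j * (Complex.normSq ((lam j : ℂ) - s))⁻¹ * s.im := by
      intro j
      rw [hu]
      simp [Complex.mul_im, Complex.inv_im, Complex.sub_im, Complex.ofReal_im,
        Complex.inv_re, div_eq_mul_inv]
      ring
    rw [Finset.sum_congr rfl (fun j _ => h2 j), ← Finset.sum_mul, mul_eq_zero] at h1
    exact h1.resolve_right him
  -- nonzero differences of eigenvalues
  have hlamne : ∀ i j : Idx N, j ≠ i → ((lam i : ℂ) - (lam j : ℂ)) ≠ 0 := by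
    intro i j hji h
    rw [sub_eq_zero] at h
    exact hji (hlaminj (by exact_mod_cast h)).symm
  set G : ℂ := ∑ j : Idx N, (b j : ℂ) * u j with hG
  -- Step C : the key identity  ∑_j Q i j * u j = -G * (λ_i - s)⁻¹
  have hS : ∀ i : Idx N, (∑ j : Idx N, (Q i j : ℂ) * u j) = -G * ((lam i : ℂ) - s)⁻¹ := by
    intro i
    have hker_i : ∑ j ∈ Finset.univ.erase i, Q i j * ξ j = -(a i * ξ i) := by
      have h0 : ∑ j : Idx N, Q i j * ξ j = 0 := by
        have := congrFun hkerξ i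
        simpa [Matrix.mulVec, dotProduct] using this
      rw [← Finset.add_sum_erase _ _ (Finset.mem_univ i), hQdiag] at h0
      linarith
    have hterm : ∀ j ∈ Finset.univ.erase i,
        (Q i j : ℂ) * u j
          = ((lam i : ℂ) - s)⁻¹ * (((b i : ℂ) - b j) * u j + ((Q i j * ξ j : ℝ) : ℂ)) := by
      intro j hj
      have hji : j ≠ i := Finset.ne_of_mem_erase hj
      rw [hQoff i j (Ne.symm hji), hu]
      have h1 : ((lam i : ℂ) - lam j) ≠ 0 := hlamne i j hji
      have h2 := hden i
      have h3 := hden j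
      have : (((b i - b j) / (lam i - lam j) : ℝ) : ℂ)
          = ((b i : ℂ) - b j) / ((lam i : ℂ) - lam j) := by push_cast; ring
      rw [this]
      push_cast
      field_simp
      ring
    have hsplit : (∑ j : Idx N, (Q i j : ℂ) * u j)
        = (Q i i : ℂ) * u i + ∑ j ∈ Finset.univ.erase i, (Q i j : ℂ) * u j :=
      (Finset.add_sum_erase Finset.univ (fun j => (Q i j : ℂ) * u j) (Finset.mem_univ i)).symm
    rw [hsplit, Finset.sum_congr rfl hterm, ← Finset.mul_sum, Finset.sum_add_distrib]
    have e1 : (∑ j ∈ Finset.univ.erase i, ((Q i j * ξ j : ℝ) : ℂ)) = -((a i : ℂ) * ξ i) := by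
      rw [← Complex.ofReal_sum, hker_i]; push_cast; ring
    have e2 : (∑ j ∈ Finset.univ.erase i, ((b i : ℂ) - b j) * u j)
        = (b i : ℂ) * (∑ j ∈ Finset.univ.erase i, u j)
          - ∑ j ∈ Finset.univ.erase i, (b j : ℂ) * u j := by
      rw [Finset.mul_sum, ← Finset.sum_sub_distrib]
      exact Finset.sum_congr rfl fun j _ => by ring
    have e3 : (∑ j ∈ Finset.univ.erase i, u j) = -u i := by
      have := Finset.add_sum_erase Finset.univ u (Finset.mem_univ i)
      rw [hF] at this
      linear_combination this
    have e4 : (∑ j ∈ Finset.univ.erase i, (b j : ℂ) * u j) = G - (b i : ℂ) * u i := by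
      have := Finset.add_sum_erase Finset.univ (fun j => (b j : ℂ) * u j) (Finset.mem_univ i)
      rw [← hG] at this
      linear_combination this
    rw [e1, e2, e3, e4, hQdiag]
    have : (a i : ℂ) * u i = (a i : ℂ) * ξ i * ((lam i : ℂ) - s)⁻¹ := by rw [hu]; ring
    rw [this]
    ring
  -- Step D/E : real and imaginary parts of u are in the kernel of Q
  set x : Idx N → ℝ := fun i => (u i).re with hx
  set y : Idx N → ℝ := fun i => (u i).im with hy
  have hQx : Q.mulVec x = 0 ∧ Q.mulVec y = 0 := by
    have hSre : ∀ i : Idx N, Q.mulVec x i = (-G * ((lam i : ℂ) - s)⁻¹).re := by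
      intro i
      rw [← hS i, Complex.re_sum]
      simp [Matrix.mulVec, dotProduct, hx, Complex.mul_re]
    have hSim : ∀ i : Idx N, Q.mulVec y i = (-G * ((lam i : ℂ) - s)⁻¹).im := by
      intro i
      rw [← hS i, Complex.im_sum]
      simp [Matrix.mulVec, dotProduct, hy, Complex.mul_im]
    -- ⟨u, Qu⟩ = -G * T = 0
    have hHzero : (∑ i : Idx N, (starRingEnd ℂ) (u i) * (-G * ((lam i : ℂ) - s)⁻¹)) = 0 := by
      have e5 : ∀ i : Idx N, (starRingEnd ℂ) (u i) * (-G * ((lam i : ℂ) - s)⁻¹)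
          = -G * ((ξ i * (Complex.normSq ((lam i : ℂ) - s))⁻¹ : ℝ) : ℂ) := by
        intro i
        rw [hu, map_mul, Complex.conj_ofReal]
        have h6 : (starRingEnd ℂ) (((lam i : ℂ) - s)⁻¹) * ((lam i : ℂ) - s)⁻¹
            = ((Complex.normSq ((lam i : ℂ) - s) : ℝ) : ℂ)⁻¹ := by
          rw [← Complex.normSq_eq_conj_mul_self, Complex.normSq_inv]
          push_cast
          ring
        push_cast
        linear_combination (ξ i : ℂ) * (-G) * h6
      rw [Finset.sum_congr rfl (fun i _ => e5 i), ← Finset.mul_sum, ← Complex.ofReal_sum, hT]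
      simp
    -- real part gives the two nonnegative quadratic forms summing to 0
    have hformx : dotProduct x (Q.mulVec x) + dotProduct y (Q.mulVec y) = 0 := by
      have := congrArg Complex.re hHzero
      rw [Complex.re_sum] at this
      simp only [Complex.zero_re] at this
      rw [dotProduct, dotProduct, ← Finset.sum_add_distrib, ← this]
      refine Finset.sum_congr rfl fun i _ => ?_
      rw [hSre i, hSim i, Complex.mul_re]
      simp [hx, hy]
      ring
    have h1 : (0:ℝ) ≤ dotProduct x (Q.mulVec x) := by
      simpa using hpsd.dotProduct_mulVec_nonneg x
    have h2 : (0:ℝ) ≤ dotProduct y (Q.mulVec y) := by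
      simpa using hpsd.dotProduct_mulVec_nonneg y
    have hx0 : dotProduct x (Q.mulVec x) = 0 := by linarith
    have hy0 : dotProduct y (Q.mulVec y) = 0 := by linarith
    constructor
    · exact (hpsd.dotProduct_mulVec_zero_iff x).mp (by simpa using hx0)
    · exact (hpsd.dotProduct_mulVec_zero_iff y).mp (by simpa using hy0)
  -- Step F : kernel is spanned by ξ
  have hspan : LinearMap.ker Q.mulVecLin = Submodule.span ℝ {ξ} := by
    have hle : Submodule.span ℝ {ξ} ≤ LinearMap.ker Q.mulVecLin := by
      rw [Submodule.span_singleton_le_iff_mem, LinearMap.mem_ker, Matrix.mulVecLin_apply]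
      exact hkerξ
    have hrank : Module.finrank ℝ (Submodule.span ℝ ({ξ} : Set (Idx N → ℝ))) = 1 :=
      finrank_span_singleton hξ
    exact (Submodule.eq_of_le_of_finrank_le hle (by rw [hrank, hker1])).symm
  obtain ⟨α, hα⟩ : ∃ α : ℝ, α • ξ = x := by
    have : x ∈ LinearMap.ker Q.mulVecLin := by
      rw [LinearMap.mem_ker, Matrix.mulVecLin_apply]; exact hQx.1
    rw [hspan] at this
    exact Submodule.mem_span_singleton.mp this
  obtain ⟨β, hβ⟩ : ∃ β : ℝ, β • ξ = y := by
    have : y ∈ LinearMap.ker Q.mulVecLin := by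
      rw [LinearMap.mem_ker, Matrix.mulVecLin_apply]; exact hQx.2
    rw [hspan] at this
    exact Submodule.mem_span_singleton.mp this
  set c : ℂ := (α : ℂ) + (β : ℂ) * Complex.I with hc
  have huc : ∀ j : Idx N, u j = c * ξ j := by
    intro j
    have : u j = (x j : ℂ) + (y j : ℂ) * Complex.I := (Complex.re_add_im (u j)).symm
    rw [this, ← hα, ← hβ]
    simp [hc]
    ring
  -- Step G : contradiction
  obtain ⟨k, hk⟩ := Function.ne_iff.mp hξ
  have hkξ : (ξ k : ℂ) ≠ 0 := by exact_mod_cast hk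
  have hcne : c ≠ 0 := by
    intro h
    have := huc k
    rw [h, zero_mul, hu] at this
    exact (mul_ne_zero hkξ (inv_ne_zero (hden k))) this
  have hsupp : ∀ j : Idx N, ξ j ≠ 0 → j = k := by
    intro j hj
    have hjξ : (ξ j : ℂ) ≠ 0 := by exact_mod_cast hj
    have e1 : ((lam j : ℂ) - s)⁻¹ = c := by
      have := huc j
      rw [hu] at this
      field_simp at this
      linear_combination this
    have e2 : ((lam k : ℂ) - s)⁻¹ = c := by
      have := huc k
      rw [hu] at this
      field_simp at this
      linear_combination this
    have : (lam j : ℂ) = lam k := by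
      have h3 := e1.trans e2.symm
      have := inv_injective h3
      linear_combination this
    exact hlaminj (by exact_mod_cast this)
  have : (∑ j : Idx N, u j) = u k := by
    refine Finset.sum_eq_single k (fun j _ hjk => ?_) (fun h => absurd (Finset.mem_univ k) h)
    have : ξ j = 0 := by
      by_contra h
      exact hjk (hsupp j h)
    rw [hu]; simp [this]
  rw [hF] at this
  have : u k = 0 := this.symm
  rw [hu] at this
  exact (mul_ne_zero hkξ (inv_ne_zero (hden k))) this
end

section
/- Let N ∈ ℕ, let λ_{−N}, …, λ_N be distinct real numbers with λ_{−j} = −λ_j, and let D be the diagonal matrix with D e_j = λ_j e_j, indexed by j ∈ {−N, …, N}. Let Q = (q_{i,j}) be the real matrix with q_{i,i} = a_i, q_{i,j} = (b_i − b_j)/(λ_i − λ_j) for i ≠ j, where a_{−i} = a_i and b_{−i} = −b_i. Assume Q is positive semidefinite, Qξ = 0, ξ_{−j} = ξ_j for all j, and ⟨ξ, η⟩ = 1 where η = Σ_j e_j. Set D' := D − |Dξ⟩⟨η|. Then for every s ∈ ℂ with s ∉ {λ_{−N}, …, λ_N} and s ≠ 0: det(D' − s·Id) = 0 if and only if Σ_{j=−N}^{N}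 ξ_j / (s − λ_j) = 0. Moreover det(D') = 0, and for λ_j ≠ 0 one has det(D' − λ_j·Id) = 0 if and only if ξ_j = 0. -/
lemma mulVec_aux {n : Type*} [Fintype n] [DecidableEq n] {F : Type*} [Field F]
    (lam w : n → F) (s : F) (v : n → F) (i : n) :
    ((Matrix.diagonal lam - Matrix.vecMulVec w (fun _ => 1)) - s • (1 : Matrix n n F)).mulVec v i
      = (lam i - s) * v i - w i * ∑ j, v j := by
  simp [Matrix.mulVec, dotProduct, Matrix.diagonal, Matrix.vecMulVec,
    Matrix.one_apply, sub_mul, Finset.sum_sub_distrib, Finset.sum_ite_eq,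
    ← Finset.mul_sum, ite_mul]
  ring

lemma map_aux {n : Type*} [Fintype n] [DecidableEq n]
    (lam w : n → ℝ) :
    ((Matrix.diagonal lam - Matrix.vecMulVec w (fun _ => 1)).map fun x : ℝ => (x : ℂ))
      = Matrix.diagonal (fun i => (lam i : ℂ)) - Matrix.vecMulVec (fun i => (w i : ℂ)) (fun _ => 1) := by
  ext i j
  simp [Matrix.diagonal, Matrix.vecMulVec, apply_ite]

/-- With distinct `λ_j` (`λ_{-j} = -λ_j`), `D = diag(λ_j)`, `Q` of the
standard form, `Q` PSD, `Qξ = 0`, `ξ` even, `⟨ξ, η⟩ = 1`, and `D' = D - |Dξ⟩⟨η|`: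
for every `s ∈ ℂ` with `s ∉ {λ_j}` and `s ≠ 0`, `det(D' - s·Id) = 0` iff
`∑_j ξ_j/(s - λ_j) = 0`; moreover `det D' = 0`, and for `λ_j ≠ 0`,
`det(D' - λ_j·Id) = 0` iff `ξ_j = 0`. -/
theorem stmt17 (N : ℕ) (lam : Idx N → ℝ)
    (hlaminj : Function.Injective lam)
    (hlamodd : ∀ j, lam (negIdx j) = -lam j)
    (D : Matrix (Idx N) (Idx N) ℝ) (hD : D = Matrix.diagonal lam)
    (a b : Idx N → ℝ) (ha : ∀ i, a (negIdx i) = a i) (hb : ∀ i, b (negIdx i) = -b i)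
    (Q : Matrix (Idx N) (Idx N) ℝ)
    (hQdiag : ∀ i, Q i i = a i)
    (hQoff : ∀ i j, i ≠ j → Q i j = (b i - b j) / (lam i - lam j))
    (hpsd : Q.PosSemidef)
    (ξ : Idx N → ℝ) (hker : Q.mulVec ξ = 0)
    (heven : ∀ i, ξ (negIdx i) = ξ i)
    (hnorm : ∑ i : Idx N, ξ i = 1)
    (D' : Matrix (Idx N) (Idx N) ℝ)
    (hD' : D' = D - Matrix.vecMulVec (D.mulVec ξ) fun _ => 1) :
    (∀ s : ℂ, (∀ j : Idx N, s ≠ (lam j : ℂ)) → s ≠ 0 →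
      (Matrix.det ((D'.map fun x : ℝ => (x : ℂ)) - s • (1 : Matrix (Idx N) (Idx N) ℂ)) = 0 ↔
        ∑ j : Idx N, (ξ j : ℂ) / (s - (lam j : ℂ)) = 0)) ∧
    Matrix.det D' = 0 ∧
    ∀ j : Idx N, lam j ≠ 0 →
      (Matrix.det (D' - lam j • (1 : Matrix (Idx N) (Idx N) ℝ)) = 0 ↔ ξ j = 0) := by
  subst hD
  have hDmul : (Matrix.diagonal lam).mulVec ξ = fun i => lam i * ξ i := by
    ext i; simp [Matrix.mulVec_diagonal]
  rw [hDmul] at hD'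
  subst hD'
  have hinj' : ∀ i j : Idx N, i ≠ j → lam i ≠ lam j := fun i j h e => h (hlaminj e)
  have hxine : ξ ≠ 0 := by
    intro h; rw [h] at hnorm; simp at hnorm
  refine ⟨?_, ?_, ?_⟩
  · -- complex part
    intro s hs hs0
    have hsub : ∀ j : Idx N, (lam j : ℂ) - s ≠ 0 := fun j => sub_ne_zero.mpr fun e => hs j e.symm
    have hsub' : ∀ j : Idx N, s - (lam j : ℂ) ≠ 0 := fun j => sub_ne_zero.mpr (hs j)
    have hnormC : ∑ j : Idx N, (ξ j : ℂ) = 1 := by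
      rw [← Complex.ofReal_sum, hnorm, Complex.ofReal_one]
    have key : s * ∑ j : Idx N, (ξ j : ℂ) / (s - (lam j : ℂ))
        = 1 - ∑ j : Idx N, (lam j : ℂ) * (ξ j : ℂ) / ((lam j : ℂ) - s) := by
      rw [← hnormC, Finset.mul_sum, ← Finset.sum_sub_distrib]
      refine Finset.sum_congr rfl fun j _ => ?_
      have h1 := hsub j
      have h2 := hsub' j
      field_simp
      ring
    rw [map_aux, ← Matrix.exists_mulVec_eq_zero_iff]
    have hmv : ∀ (v : Idx N → ℂ) (i : Idx N),
        ((Matrix.diagonal (fun i => (lam i : ℂ)) -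
          Matrix.vecMulVec (fun i => ((lam i * ξ i : ℝ) : ℂ)) (fun _ => 1)) - s • 1).mulVec v i
        = ((lam i : ℂ) - s) * v i - (lam i : ℂ) * (ξ i : ℂ) * ∑ j, v j := by
      intro v i
      rw [mulVec_aux]
      push_cast
      ring
    constructor
    · rintro ⟨v, hv, hmul⟩
      have hvi : ∀ i, v i = (lam i : ℂ) * (ξ i : ℂ) * (∑ j, v j) / ((lam i : ℂ) - s) := by
        intro i
        have h := congrFun hmul i
        rw [hmv, Pi.zero_apply] at h
        rw [eq_div_iff (hsub i)]
        linear_combination h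
      have hcne : (∑ j, v j) ≠ 0 := by
        intro h0
        apply hv
        funext i
        show v i = 0
        rw [hvi i, h0, mul_zero, zero_div]
      have hs1 : (∑ j, v j) = (∑ j, v j) * ∑ j : Idx N, (lam j : ℂ) * (ξ j : ℂ) / ((lam j : ℂ) - s) := by
        rw [Finset.mul_sum]
        refine Finset.sum_congr rfl fun j _ => ?_
        rw [hvi j]; ring
      have hsum1 : ∑ j : Idx N, (lam j : ℂ) * (ξ j : ℂ) / ((lam j : ℂ) - s) = 1 := by
        have h3 : (∑ j, v j) * 1 = (∑ j, v j) * ∑ j : Idx N, (lam j : ℂ) * (ξ j : ℂ) / ((lam j : ℂ) - s) := by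
          rw [mul_one]; exact hs1
        exact (mul_left_cancel₀ hcne h3).symm
      have h4 : s * ∑ j : Idx N, (ξ j : ℂ) / (s - (lam j : ℂ)) = 0 := by
        rw [key, hsum1, sub_self]
      exact (mul_eq_zero.mp h4).resolve_left hs0
    · intro hsum
      have hsv : ∑ j : Idx N, (lam j : ℂ) * (ξ j : ℂ) / ((lam j : ℂ) - s) = 1 := by
        have hk := key
        rw [hsum, mul_zero] at hk
        linear_combination hk
      refine ⟨fun j => (lam j : ℂ) * (ξ j : ℂ) / ((lam j : ℂ) - s), ?_, ?_⟩
      · intro h0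
        have h1 : ∑ j : Idx N, (lam j : ℂ) * (ξ j : ℂ) / ((lam j : ℂ) - s) = 0 := by
          refine Finset.sum_eq_zero fun j _ => ?_
          exact congrFun h0 j
        rw [hsv] at h1
        exact one_ne_zero h1
      · funext i
        rw [hmv, Pi.zero_apply, hsv, mul_one]
        have h := hsub i
        field_simp
        ring
  · -- det D' = 0
    rw [← Matrix.exists_mulVec_eq_zero_iff]
    refine ⟨ξ, hxine, ?_⟩
    funext i
    have h0 : (Matrix.diagonal lam - Matrix.vecMulVec (fun i => lam i * ξ i) (fun _ => 1))
        = (Matrix.diagonal lam - Matrix.vecMulVec (fun i => lam i * ξ i) (fun _ => 1)) - (0:ℝ) • 1 := by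
      simp
    rw [h0, mulVec_aux, hnorm]
    simp
  · -- third part
    intro j hj
    rw [← Matrix.exists_mulVec_eq_zero_iff]
    have hmv : ∀ (v : Idx N → ℝ) (i : Idx N),
        ((Matrix.diagonal lam - Matrix.vecMulVec (fun i => lam i * ξ i) (fun _ => 1))
          - lam j • 1).mulVec v i
        = (lam i - lam j) * v i - lam i * ξ i * ∑ k, v k := by
      intro v i; rw [mulVec_aux]
    constructor
    · rintro ⟨v, hv, hmul⟩
      have heq : ∀ i, (lam i - lam j) * v i = lam i * ξ i * ∑ k, v k := by
        intro i
        have h := congrFun hmul i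
        rw [hmv, Pi.zero_apply] at h
        linarith
      by_cases hc0 : (∑ k, v k) = 0
      · exfalso
        apply hv
        have hvz : ∀ k, k ≠ j → v k = 0 := by
          intro k hk
          have h := heq k
          rw [hc0, mul_zero] at h
          rcases mul_eq_zero.mp h with h' | h'
          · exact absurd (sub_eq_zero.mp h') (hinj' k j hk)
          · exact h'
        funext i
        show v i = 0
        by_cases hij : i = j
        · subst hij
          have hsum : (∑ k, v k) = v i := by
            rw [← Finset.add_sum_erase _ v (Finset.mem_univ i),
              Finset.sum_eq_zero fun k hk => hvz k (Finset.ne_of_mem_erase hk)]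
            ring
          rw [← hsum, hc0]
        · exact hvz i hij
      · have h := heq j
        rw [sub_self, zero_mul] at h
        rcases mul_eq_zero.mp h.symm with h' | h'
        · rcases mul_eq_zero.mp h' with h'' | h''
          · exact absurd h'' hj
          · exact h''
        · exact absurd h' hc0
    · intro hxj
      set t : ℝ := ∑ i ∈ Finset.univ.erase j, lam i * ξ i / (lam i - lam j) with ht
      set v : Idx N → ℝ := fun i => if i = j then 1 - t else lam i * ξ i / (lam i - lam j)
        with hvdef
      have hsumv : ∑ k, v k = 1 := by
        rw [← Finset.add_sum_erase _ v (Finset.mem_univ j)]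
        have h1 : v j = 1 - t := by simp [hvdef]
        have h2 : ∑ k ∈ Finset.univ.erase j, v k = t := by
          rw [ht]
          exact Finset.sum_congr rfl fun k hk => by
            simp [hvdef, Finset.ne_of_mem_erase hk]
        rw [h1, h2]; ring
      refine ⟨v, ?_, ?_⟩
      · intro h0
        rw [h0] at hsumv
        simp at hsumv
      · funext i
        rw [hmv, Pi.zero_apply, hsumv, mul_one]
        by_cases hij : i = j
        · subst hij
          simp [hxj]
        · have hvi : v i = lam i * ξ i / (lam i - lam j) := by simp [hvdef, hij]
          rw [hvi]
          have h := sub_ne_zero.mpr (hinj' i j hij)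
          field_simp
          ring
end

section
/- Let N ∈ ℕ, let λ_{−N}, …, λ_N be distinct real numbers with λ_{−j} = −λ_j, and let D be the diagonal matrix with D e_j = λ_j e_j, indexed by j ∈ {−N, …, N}. Let Q = (q_{i,j}) be the real matrix with q_{i,i} = a_i, q_{i,j} = (b_i − b_j)/(λ_i − λ_j) for i ≠ j, where a_{−i} = a_i and b_{−i} = −b_i. Assume Q is positive semidefinite, Qξ = 0, ξ_{−j} = ξ_j for all j, and ⟨ξ, η⟩ = 1 where η = Σ_j e_j. Let R be the matrix with entries R_{i,j} = −(Dξ)_i for all i, j (i.e. R = −|Dξ⟩⟨η|). Then Σ_j R_{j,j} b_j = ⟨Dξ, Dξ⟩_Q and Σ_{i,j} R_{i,j} R_{j,i} q_{i,j} = ⟨Dξ, Dξ⟩_Q, where ⟨u, v⟩_Q := ⟨Qu, v⟩ = Σ_{i,j} q_{i,j} u_j v_i. -/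
/-- With distinct `λ_j` (`λ_{-j} = -λ_j`), `D = diag(λ_j)`, `Q` of the
standard form, `Q` PSD, `Qξ = 0`, `ξ` even, `⟨ξ, η⟩ = 1`, and `R = -|Dξ⟩⟨η|`
(`R_{i,j} = -(Dξ)_i`), one has `∑_j R_{j,j} b_j = ⟨Dξ, Dξ⟩_Q` and
`∑_{i,j} R_{i,j} R_{j,i} q_{i,j} = ⟨Dξ, Dξ⟩_Q`, with `⟨u, v⟩_Q = ⟨Qu, v⟩`. -/
theorem stmt18 (N : ℕ) (lam : Idx N → ℝ)
    (hlaminj : Function.Injective lam)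
    (hlamodd : ∀ j, lam (negIdx j) = -lam j)
    (D : Matrix (Idx N) (Idx N) ℝ) (hD : D = Matrix.diagonal lam)
    (a b : Idx N → ℝ) (ha : ∀ i, a (negIdx i) = a i) (hb : ∀ i, b (negIdx i) = -b i)
    (Q : Matrix (Idx N) (Idx N) ℝ)
    (hQdiag : ∀ i, Q i i = a i)
    (hQoff : ∀ i j, i ≠ j → Q i j = (b i - b j) / (lam i - lam j))
    (hpsd : Q.PosSemidef)
    (ξ : Idx N → ℝ) (hker : Q.mulVec ξ = 0)
    (heven : ∀ i, ξ (negIdx i) = ξ i)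
    (hnorm : ∑ i : Idx N, ξ i = 1)
    (R : Matrix (Idx N) (Idx N) ℝ)
    (hR : ∀ i j, R i j = -(D.mulVec ξ) i) :
    (∑ j : Idx N, R j j * b j) =
        dotProduct (Q.mulVec (D.mulVec ξ)) (D.mulVec ξ) ∧
      (∑ i : Idx N, ∑ j : Idx N, R i j * R j i * Q i j) =
        dotProduct (Q.mulVec (D.mulVec ξ)) (D.mulVec ξ) := by
  have hv : ∀ i, D.mulVec ξ i = lam i * ξ i := by
    intro i; simp [hD, Matrix.mulVec_diagonal]
  have hinv : ∀ i : Idx N, negIdx (negIdx i) = i := by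
    intro i; simp [negIdx]
  have hSb : ∑ j : Idx N, b j * ξ j = 0 := by
    have h1 : ∑ j : Idx N, b j * ξ j
        = ∑ j : Idx N, b (negIdx j) * ξ (negIdx j) :=
      Fintype.sum_equiv (⟨negIdx, negIdx, hinv, hinv⟩ : Idx N ≃ Idx N)
        (fun j => b j * ξ j) (fun j => b (negIdx j) * ξ (negIdx j)) (fun j => by simp [hinv])
    have h2 : ∑ j : Idx N, b (negIdx j) * ξ (negIdx j)
        = -∑ j : Idx N, b j * ξ j := by
      rw [← Finset.sum_neg_distrib]
      exact Finset.sum_congr rfl fun j _ => by rw [hb, heven]; ring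
    linarith [h1.trans h2]
  have hQv : ∀ i, Q.mulVec (D.mulVec ξ) i = -b i := by
    intro i
    have hk : ∑ j : Idx N, Q i j * ξ j = 0 := by
      have := congrFun hker i
      simpa [Matrix.mulVec, dotProduct] using this
    have key : ∀ j, Q i j * (D.mulVec ξ) j
        = lam i * (Q i j * ξ j) + (if j = i then 0 else -(b i - b j) * ξ j) := by
      intro j
      rw [hv]
      by_cases h : j = i
      · subst h; simp; ring
      · simp only [if_neg h]
        have hne : lam i - lam j ≠ 0 := by
          intro hc
          exact (Ne.symm h) (hlaminj (by linarith))
        rw [hQoff i j (Ne.symm h)]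
        field_simp
        ring
    have : Q.mulVec (D.mulVec ξ) i
        = lam i * (∑ j : Idx N, Q i j * ξ j)
          + ∑ j : Idx N, (if j = i then 0 else -(b i - b j) * ξ j) := by
      simp only [Matrix.mulVec, dotProduct]
      rw [Finset.mul_sum, ← Finset.sum_add_distrib]
      exact Finset.sum_congr rfl fun j _ => key j
    rw [this, hk, mul_zero, zero_add]
    have split : ∀ j : Idx N, (if j = i then 0 else -(b i - b j) * ξ j)
        = (-(b i - b j) * ξ j) - (if j = i then -(b i - b j) * ξ j else 0) := by
      intro j; by_cases h : j = i <;> simp [h]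
    rw [Finset.sum_congr rfl fun j _ => split j, Finset.sum_sub_distrib,
      Finset.sum_ite_eq' Finset.univ i]
    simp only [Finset.mem_univ, if_pos, sub_self, neg_zero, zero_mul, sub_zero]
    have : ∑ j : Idx N, -(b i - b j) * ξ j
        = -(b i) * (∑ j : Idx N, ξ j) + ∑ j : Idx N, b j * ξ j := by
      rw [Finset.mul_sum, ← Finset.sum_add_distrib]
      exact Finset.sum_congr rfl fun j _ => by ring
    rw [this, hnorm, hSb]; ring
  constructor
  · rw [dotProduct]
    refine Finset.sum_congr rfl fun j _ => ?_
    rw [hR, hv, hQv]; ring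
  · rw [dotProduct]
    have : ∀ i, Q.mulVec (D.mulVec ξ) i * (D.mulVec ξ) i
        = ∑ j : Idx N, Q i j * (D.mulVec ξ) j * (D.mulVec ξ) i := by
      intro i
      simp only [Matrix.mulVec, dotProduct]
      rw [Finset.sum_mul]
    rw [Finset.sum_congr rfl fun i _ => this i]
    refine Finset.sum_congr rfl fun i _ => Finset.sum_congr rfl fun j _ => ?_
    rw [hR, hR]; ring
end

section
/- Let a, b, c, d be real numbers and let M be the 3×3 real symmetric matrix with rows (d, b, b), (b, c, b), (b, b, d), indexed by n, m ∈ {−1, 0, 1} (this is the general form of the matrix q_{n,m} arising from any real distribution on [0,1]). Let λ be the largest (respectively, the smallest) eigenvalue of M and assume its eigenspace is one-dimensional, spanned by ξ = (ξ_{−1}, ξ_0, ξ_1). Define ξ(x) := ξ_{−1} e^{−2πix} + ξ_0 + ξ_1 e^{2πix} for x ∈ [0, 1] and ξ(x) = 0 for x ∉ [0, 1]. Then every z ∈ ℂ with ξ̂(z) = 0 is real, where ξ̂(z) = ∫_0^1 ξ(x) e^{−izx} dx. -/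
/-- Let `M` be the `3×3` real symmetric matrix with rows `(d, b, b)`,
`(b, c, b)`, `(b, b, d)` (indexed by `{-1, 0, 1}`; this is the general form of the truncated
quadratic form of a real distribution on `[0,1]` for `N = 1`). If `λ` is the largest
(respectively smallest) eigenvalue of `M`, its eigenspace is one-dimensional and spanned by
`ξ = (ξ_{-1}, ξ_0, ξ_1)`, and `ξ(x) = ξ_{-1} e^{-2πix} + ξ_0 + ξ_1 e^{2πix}` on `[0, 1]`
(extended by zero), then every zero of `ξ̂(z) = ∫_0^1 ξ(x) e^{-izx} dx` is real. -/
theorem stmt19 (b c d : ℝ)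
    (M : Matrix (Fin 3) (Fin 3) ℝ)
    (hM : M = Matrix.of ![![d, b, b], ![b, c, b], ![b, b, d]])
    (lam : ℝ)
    (hext : (∀ μ : ℝ, (∃ v : Fin 3 → ℝ, v ≠ 0 ∧ M.mulVec v = μ • v) → μ ≤ lam) ∨
            (∀ μ : ℝ, (∃ v : Fin 3 → ℝ, v ≠ 0 ∧ M.mulVec v = μ • v) → lam ≤ μ))
    (ξ : Fin 3 → ℝ) (hξ : ξ ≠ 0) (heig : M.mulVec ξ = lam • ξ)
    (hsimple : ∀ v : Fin 3 → ℝ, M.mulVec v = lam • v → ∃ t : ℝ, v = t • ξ)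
    (z : ℂ)
    (hz : (∫ x in Set.Icc (0 : ℝ) 1,
        ((ξ 0 : ℂ) * Complex.exp (-(2 * Real.pi * Complex.I) * x) + (ξ 1 : ℂ) +
            (ξ 2 : ℂ) * Complex.exp (2 * Real.pi * Complex.I * x)) *
          Complex.exp (-Complex.I * z * x)) = 0) :
    z.im = 0 := by
  by_contra him
  subst hM
  -- Step 1: from the vanishing integral, derive a polynomial equation on `z`.
  have hpoly : (ξ 0 : ℂ) * z * (2*Real.pi - z) + (ξ 1 : ℂ) * (4*Real.pi^2 - z^2)
      - (ξ 2 : ℂ) * z * (2*Real.pi + z) = 0 := by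
    set cm : ℂ := -(2 * Real.pi * Complex.I) - Complex.I * z with hcm
    set c0 : ℂ := -(Complex.I * z) with hc0
    set cp : ℂ := 2 * Real.pi * Complex.I - Complex.I * z with hcp
    have hrm : cm.re = z.im := by simp [hcm]
    have hr0 : c0.re = z.im := by simp [hc0]
    have hrp : cp.re = z.im := by simp [hcp]
    have h0cm : cm ≠ 0 := fun h => him (by rw [← hrm, h]; simp)
    have h0c0 : c0 ≠ 0 := fun h => him (by rw [← hr0, h]; simp)
    have h0cp : cp ≠ 0 := fun h => him (by rw [← hrp, h]; simp)
    rw [MeasureTheory.integral_Icc_eq_integral_Ioc,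
      ← intervalIntegral.integral_of_le zero_le_one] at hz
    rw [intervalIntegral.integral_congr (g := fun x : ℝ =>
        (ξ 0 : ℂ) * Complex.exp (cm * x) + (ξ 1 : ℂ) * Complex.exp (c0 * x)
          + (ξ 2 : ℂ) * Complex.exp (cp * x)) ?_] at hz
    swap
    · intro x _
      beta_reduce
      rw [show cm * (x:ℂ) = -(2 * Real.pi * Complex.I) * x + -Complex.I * z * x by
          rw [hcm]; ring,
        show c0 * (x:ℂ) = (0:ℂ) + -Complex.I * z * x by rw [hc0]; ring,
        show cp * (x:ℂ) = 2 * Real.pi * Complex.I * x + -Complex.I * z * x by rw [hcp]; ring,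
        Complex.exp_add, Complex.exp_add, Complex.exp_add, Complex.exp_zero]
      ring
    have i1 : IntervalIntegrable (fun x : ℝ => (ξ 0 : ℂ) * Complex.exp (cm * x))
        MeasureTheory.volume 0 1 := by apply Continuous.intervalIntegrable; fun_prop
    have i2 : IntervalIntegrable (fun x : ℝ => (ξ 1 : ℂ) * Complex.exp (c0 * x))
        MeasureTheory.volume 0 1 := by apply Continuous.intervalIntegrable; fun_prop
    have i3 : IntervalIntegrable (fun x : ℝ => (ξ 2 : ℂ) * Complex.exp (cp * x))
        MeasureTheory.volume 0 1 := by apply Continuous.intervalIntegrable; fun_prop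
    rw [intervalIntegral.integral_add (i1.add i2) i3,
      intervalIntegral.integral_add i1 i2,
      intervalIntegral.integral_const_mul, intervalIntegral.integral_const_mul,
      intervalIntegral.integral_const_mul,
      integral_exp_mul_complex h0cm, integral_exp_mul_complex h0c0,
      integral_exp_mul_complex h0cp] at hz
    simp only [Complex.ofReal_one, Complex.ofReal_zero, mul_one, mul_zero,
      Complex.exp_zero] at hz
    have em : Complex.exp cm = Complex.exp c0 := by
      rw [show cm = -(2 * Real.pi * Complex.I) + c0 by rw [hcm, hc0]; ring,
        Complex.exp_add, Complex.exp_neg, Complex.exp_two_pi_mul_I]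
      simp
    have ep : Complex.exp cp = Complex.exp c0 := by
      rw [show cp = 2 * Real.pi * Complex.I + c0 by rw [hcp, hc0]; ring,
        Complex.exp_add, Complex.exp_two_pi_mul_I]
      simp
    rw [em, ep] at hz
    have hE : Complex.exp c0 - 1 ≠ 0 := by
      intro h
      apply him
      have h' : Complex.exp c0 = 1 := by linear_combination h
      have habs := congrArg norm h'
      rw [Complex.norm_exp, hr0, norm_one] at habs
      have : Real.exp z.im = Real.exp 0 := by rw [habs, Real.exp_zero]
      exact Real.exp_eq_exp.mp this
    have hsum : (ξ 0 : ℂ) / cm + (ξ 1 : ℂ) / c0 + (ξ 2 : ℂ) / cp = 0 := by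
      have h2 : (Complex.exp c0 - 1) * ((ξ 0 : ℂ) / cm + (ξ 1 : ℂ) / c0 + (ξ 2 : ℂ) / cp)
          = 0 := by rw [← hz]; ring
      rcases mul_eq_zero.mp h2 with h | h
      · exact absurd h hE
      · exact h
    field_simp at hsum
    rw [hcm, hc0, hcp] at hsum
    linear_combination hsum + ((ξ 0:ℂ) * z * (2*Real.pi - z) + (ξ 1:ℂ) * (4*Real.pi^2 - z^2)
        - (ξ 2:ℂ) * z * (2*Real.pi + z)) * Complex.I_sq
  -- Step 2: componentwise eigen equations.
  have e0 : d * ξ 0 + b * ξ 1 + b * ξ 2 = lam * ξ 0 := by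
    have := congrFun heig 0
    simpa [Matrix.mulVec, dotProduct, Fin.sum_univ_three] using this
  have e1 : b * ξ 0 + c * ξ 1 + b * ξ 2 = lam * ξ 1 := by
    have := congrFun heig 1
    simpa [Matrix.mulVec, dotProduct, Fin.sum_univ_three] using this
  have e2 : b * ξ 0 + b * ξ 1 + d * ξ 2 = lam * ξ 2 := by
    have := congrFun heig 2
    simpa [Matrix.mulVec, dotProduct, Fin.sum_univ_three] using this
  have hξ' : ¬ (ξ 0 = 0 ∧ ξ 1 = 0 ∧ ξ 2 = 0) := by
    rintro ⟨h0, h1, h2⟩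
    apply hξ
    funext i
    fin_cases i <;> simpa
  -- Step 3: symmetry of the extreme eigenvector.
  have hrev : Matrix.mulVec (Matrix.of ![![d, b, b], ![b, c, b], ![b, b, d]]) ![ξ 2, ξ 1, ξ 0]
      = lam • ![ξ 2, ξ 1, ξ 0] := by
    funext i
    fin_cases i <;>
      simp [Matrix.mulVec, dotProduct, Fin.sum_univ_three] <;> linarith
  obtain ⟨t, ht⟩ := hsimple _ hrev
  have ht0 : ξ 2 = t * ξ 0 := by simpa using congrFun ht 0
  have ht1 : ξ 1 = t * ξ 1 := by simpa using congrFun ht 1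
  have ht2 : ξ 0 = t * ξ 2 := by simpa using congrFun ht 2
  rcases eq_or_ne t 1 with rfl | htne1
  · -- symmetric case : ξ 2 = ξ 0
    rw [one_mul] at ht0
    rw [← ht0] at e0 e1 hpoly
    -- the quadratic equation (2 ξ₂ + ξ₁) z² = 4 π² ξ₁ over ℂ
    have hC : ((2 * ξ 2 + ξ 1 : ℝ) : ℂ) * (z * z) = ((4 * Real.pi^2 * ξ 1 : ℝ) : ℂ) := by
      push_cast
      linear_combination (-1 : ℂ) * hpoly
    -- positivity of the key real quantity
    have hK : 0 ≤ ξ 1 * (ξ 1 + 2 * ξ 2) := by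
      by_cases hb : b = 0
      · rw [hb] at e0 e1
        rcases eq_or_ne (ξ 2) 0 with h2 | h2
        · rw [h2]; nlinarith [sq_nonneg (ξ 1)]
        · rcases eq_or_ne (ξ 1) 0 with h1 | h1
          · rw [h1]; simp
          · exfalso
            have hd : d = lam := by
              have : d * ξ 2 = lam * ξ 2 := by linarith
              exact mul_right_cancel₀ h2 this
            have hc : c = lam := by
              have : c * ξ 1 = lam * ξ 1 := by linarith
              exact mul_right_cancel₀ h1 this
            have hv : Matrix.mulVec (Matrix.of ![![d, b, b], ![b, c, b], ![b, b, d]])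
                ![1, 0, 0] = lam • ![(1:ℝ), 0, 0] := by
              funext i
              fin_cases i <;>
                simp [Matrix.mulVec, dotProduct, Fin.sum_univ_three, hb, hd]
            obtain ⟨s, hs⟩ := hsimple _ hv
            have hs1 : (0:ℝ) = s * ξ 1 := by simpa using congrFun hs 1
            have hs0 : (1:ℝ) = s * ξ 0 := by simpa using congrFun hs 0
            rcases mul_eq_zero.mp hs1.symm with h | h
            · rw [h, zero_mul] at hs0; exact one_ne_zero hs0
            · exact h1 h
      · -- b ≠ 0
        have hr : ξ 2 ≠ 0 := by
          intro h
          have h1 : ξ 1 = 0 := by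
            have : b * ξ 1 = 0 := by rw [h] at e0; linarith
            rcases mul_eq_zero.mp this with h' | h'
            · exact absurd h' hb
            · exact h'
          exact hξ' ⟨by rw [← ht0]; exact h, h1, h⟩
        have h1 : b * ξ 1 = (lam - d - b) * ξ 2 := by linarith
        have hchar : (lam - c) * (lam - d - b) = 2 * b^2 := by
          have h2 : (lam - c) * ξ 1 = 2 * b * ξ 2 := by linarith
          have h3 : ((lam - c) * (lam - d - b) - 2 * b^2) * ξ 2 = 0 := by
            linear_combination b * h2 - (lam - c) * h1
          rcases mul_eq_zero.mp h3 with h | h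
          · linarith
          · exact absurd h hr
        have hb2 : (0:ℝ) < b^2 := by positivity
        have hprod : 0 ≤ (lam - d - b) * (lam - d + b) := by
          have hv1 : Matrix.mulVec (Matrix.of ![![d, b, b], ![b, c, b], ![b, b, d]])
              ![1, 0, -1] = (d - b) • ![(1:ℝ), 0, -1] := by
            funext i
            fin_cases i <;>
              simp [Matrix.mulVec, dotProduct, Fin.sum_univ_three] <;> ring
          have hv1ne : (![1, 0, -1] : Fin 3 → ℝ) ≠ 0 := by
            intro h
            simpa using congrFun h 0
          have hv2 : Matrix.mulVec (Matrix.of ![![d, b, b], ![b, c, b], ![b, b, d]])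
              ![b, c - lam, b] = (c + d + b - lam) • ![b, c - lam, b] := by
            funext i
            fin_cases i <;> simp [Matrix.mulVec, dotProduct, Fin.sum_univ_three]
            · ring
            · linear_combination -hchar
            · ring
          have hv2ne : (![b, c - lam, b] : Fin 3 → ℝ) ≠ 0 := by
            intro h
            exact hb (by simpa using congrFun h 0)
          rcases hext with hmax | hmin
          · have ha : d - b ≤ lam := hmax _ ⟨_, hv1ne, hv1⟩
            have ha2 : c + d + b - lam ≤ lam := hmax _ ⟨_, hv2ne, hv2⟩
            rcases le_or_gt 0 (lam - d - b) with h | h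
            · exact mul_nonneg h (by linarith)
            · exfalso
              have hcc : lam - c < 0 := by
                by_contra hcc
                push_neg at hcc
                have := mul_nonneg hcc (by linarith : (0:ℝ) ≤ -(lam - d - b))
                nlinarith
              linarith
          · have ha : lam ≤ d - b := hmin _ ⟨_, hv1ne, hv1⟩
            have ha2 : lam ≤ c + d + b - lam := hmin _ ⟨_, hv2ne, hv2⟩
            rcases le_or_gt (lam - d - b) 0 with h | h
            · have h' : lam - d + b ≤ 0 := by linarith
              nlinarith [mul_nonneg (neg_nonneg.mpr h) (neg_nonneg.mpr h')]
            · exfalso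
              have hcc : 0 < lam - c := by
                by_contra hcc
                push_neg at hcc
                have := mul_nonneg (by linarith : (0:ℝ) ≤ -(lam - c)) (le_of_lt h)
                nlinarith
              linarith
        have hkey : b^2 * (ξ 1 * (ξ 1 + 2 * ξ 2))
            = ((lam - d - b) * (lam - d + b)) * ξ 2 ^ 2 := by
          linear_combination (b * ξ 1 + (lam - d - b) * ξ 2 + 2 * b * ξ 2) * h1
        nlinarith [mul_nonneg hprod (sq_nonneg (ξ 2)), hkey, hb2]
    -- Step 4: contradiction from the quadratic equation.
    have hIm := congrArg Complex.im hC
    have hRe := congrArg Complex.re hC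
    simp only [Complex.mul_im, Complex.mul_re, Complex.ofReal_re, Complex.ofReal_im,
      zero_mul, mul_zero, add_zero, zero_add, sub_zero] at hIm hRe
    rcases eq_or_ne (2 * ξ 2 + ξ 1) 0 with hS | hS
    · rw [hS] at hRe
      have h1 : ξ 1 = 0 := by
        have h4 : 4 * Real.pi^2 * ξ 1 = 0 := by linarith [hRe]
        rcases mul_eq_zero.mp h4 with h | h
        · exact absurd h (by positivity)
        · exact h
      have h2 : ξ 2 = 0 := by linarith [hS, h1]
      exact hξ' ⟨by rw [← ht0]; exact h2, h1, h2⟩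
    · have hre0 : z.re = 0 := by
        have : (2 * ξ 2 + ξ 1) * (z.re * z.im + z.im * z.re) = 0 := hIm
        rcases mul_eq_zero.mp this with h | h
        · exact absurd h hS
        · rcases mul_eq_zero.mp (by linarith [h] : (2 * z.re) * z.im = 0) with h' | h'
          · linarith
          · exact absurd h' him
      rw [hre0] at hRe
      have hkey2 : (2 * ξ 2 + ξ 1)^2 * z.im^2 = -(4 * Real.pi^2 * (ξ 1 * (ξ 1 + 2 * ξ 2))) := by
        linear_combination (-(2 * ξ 2 + ξ 1)) * hRe
      have hS2 : 0 < (2 * ξ 2 + ξ 1)^2 := by positivity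
      have him2 : 0 < z.im^2 := by positivity
      have hKK : 0 ≤ 4 * Real.pi^2 * (ξ 1 * (ξ 1 + 2 * ξ 2)) :=
        mul_nonneg (by positivity) hK
      linarith [hkey2, hKK, mul_pos hS2 him2]
  rcases eq_or_ne t (-1) with rfl | htne2
  · -- antisymmetric case
    have h1 : ξ 1 = 0 := by linarith [ht1]
    have h02 : ξ 2 = -ξ 0 := by linarith [ht0]
    have h0ne : ξ 0 ≠ 0 := by
      intro h
      exact hξ' ⟨h, h1, by rw [h02, h, neg_zero]⟩
    have hzz : ((4 * Real.pi * ξ 0 : ℝ) : ℂ) * z = 0 := by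
      push_cast
      rw [h1, h02] at hpoly
      push_cast at hpoly
      linear_combination hpoly
    rcases mul_eq_zero.mp hzz with h | h
    · have : (4 * Real.pi * ξ 0 : ℝ) ≠ 0 := by
        have := Real.pi_ne_zero
        positivity
      exact this (by exact_mod_cast h)
    · exact him (by rw [h]; simp)
  · -- |t| ≠ 1 : impossible
    exfalso
    have h2 : (1 - t^2) * ξ 0 = 0 := by
      have : ξ 0 = t * (t * ξ 0) := by rw [← ht0]; exact ht2
      linear_combination this
    have h2' : (1 - t^2) * ξ 2 = 0 := by
      have : ξ 2 = t * (t * ξ 2) := by rw [← ht2]; exact ht0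
      linear_combination this
    have ht2ne : 1 - t^2 ≠ 0 := by
      intro h
      rcases mul_self_eq_one_iff.mp (by nlinarith : t * t = 1) with h' | h'
      · exact htne1 h'
      · exact htne2 h'
    have h1 : ξ 1 = 0 := by
      have : (1 - t) * ξ 1 = 0 := by linear_combination ht1
      rcases mul_eq_zero.mp this with h | h
      · exact absurd (by linarith : t = 1) htne1
      · exact h
    exact hξ' ⟨by rcases mul_eq_zero.mp h2 with h | h; exacts [absurd h ht2ne, h], h1,
      by rcases mul_eq_zero.mp h2' with h | h; exacts [absurd h ht2ne, h]⟩
end
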